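/- arXiv:2509.02841 — 9 statements merged into one kernel-verified Lean document; each statement's English description precedes it below -/
import Mathlib

section
/- Let P_n be the poset on [n] with i <_P j iff i + 2 ≤ j. If w = w_1 w_2 ... w_k is a powersum permutation of a subset S ⊆ [n] for P_n (a word with no repeated letters, no P-descents, and no nontrivial right-to-left P-minima), then S is an interval {a, a+1, ..., a+k−1} for some a, and there exists 1 ≤ i ≤ k such that w = a, a+1, ..., a+i−2, a+k−1, a+k−2, ..., a+i−1 (i.e. w increases by 1 up to position i−1 and then lists the remaining elements in decreasing order starting from the maximum). -/
/-- Discrete intermediate value: if consecutive values drop by at most 1,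
then any value between a later low and an earlier high is attained. -/
private lemma ivt_aux (k : ℕ) (v : ℕ → ℕ)
    (A : ∀ t, t + 1 < k → v t ≤ v (t + 1) + 1) :
    ∀ d p c, p + d < k → c ≤ v p → v (p + d) ≤ c →
      ∃ m, p ≤ m ∧ m ≤ p + d ∧ v m = c := by
  intro d
  induction d with
  | zero =>
    intro p c hpk h1 h2
    rw [Nat.add_zero] at h2
    exact ⟨p, le_refl _, by omega, by omega⟩
  | succ d ih =>
    intro p c hpk h1 h2
    by_cases hc : c ≤ v (p + 1)
    · have h2' : v (p + 1 + d) ≤ c := by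
        have e : p + 1 + d = p + (d + 1) := by omega
        rw [e]; exact h2
      obtain ⟨m, hm1, hm2, hm3⟩ := ih (p + 1) c (by omega) hc h2'
      exact ⟨m, by omega, by omega, hm3⟩
    · have hA := A p (by omega)
      exact ⟨p, le_refl _, by omega, by omega⟩

/-- Descent persistence: after a descent, every later step is a descent. -/
private lemma persist_aux (k : ℕ) (v : ℕ → ℕ)
    (A : ∀ t, t + 1 < k → v t ≤ v (t + 1) + 1)
    (inj : ∀ s t, s < k → t < k → v s = v t → s = t)
    (hm : ∀ t, t + 1 < k → ∃ j, t < j ∧ j < k ∧ v j ≤ v t + 1)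
    (r : ℕ) (hr : r + 1 < k) (hd : v (r + 1) < v r) :
    ∀ s, r ≤ s → s + 1 < k → v (s + 1) < v s := by
  intro s hrs
  induction s, hrs using Nat.le_induction with
  | base => intro _; exact hd
  | succ s hs ih =>
    intro hk2
    show v (s + 2) < v (s + 1)
    have hk2' : s + 2 < k := hk2
    have ihs : v (s + 1) < v s := ih (by omega)
    have hA := A s (by omega)
    by_contra hno
    push_neg at hno
    have hne : v (s + 2) ≠ v (s + 1) := fun h => by
      have := inj (s + 2) (s + 1) (by omega) (by omega) h; omega
    obtain ⟨j, hj1, hj2, hj3⟩ := hm (s + 1) (by omega)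
    have hv1 : v j ≠ v s := fun h => by
      have := inj j s (by omega) (by omega) h; omega
    have hv2 : v j ≠ v (s + 1) := fun h => by
      have := inj j (s + 1) (by omega) (by omega) h; omega
    have hjge : s + 2 ≤ j := by omega
    have h2' : v (s + 2 + (j - (s + 2))) ≤ v (s + 1) := by
      have e : s + 2 + (j - (s + 2)) = j := by omega
      rw [e]; omega
    obtain ⟨m, hm1, hm2, hm3⟩ := ivt_aux k v A (j - (s + 2)) (s + 2) (v (s + 1))
      (by omega) (by omega) h2'
    have := inj m (s + 1) (by omega) (by omega) hm3
    omega

/-- After a jump of size ≥ 2, the very next step must be a descent. -/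
private lemma gap_aux (k : ℕ) (v : ℕ → ℕ)
    (A : ∀ t, t + 1 < k → v t ≤ v (t + 1) + 1)
    (inj : ∀ s t, s < k → t < k → v s = v t → s = t)
    (hm : ∀ t, t + 1 < k → ∃ j, t < j ∧ j < k ∧ v j ≤ v t + 1)
    (t : ℕ) (ht : t + 2 < k) (hg : v t + 2 ≤ v (t + 1)) :
    v (t + 2) < v (t + 1) := by
  by_contra hno
  push_neg at hno
  obtain ⟨j, hj1, hj2, hj3⟩ := hm t (by omega)
  have hjne : j ≠ t + 1 := fun h => by rw [h] at hj3; omega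
  have hjge : t + 2 ≤ j := by omega
  have h2' : v (t + 2 + (j - (t + 2))) ≤ v (t + 1) := by
    have e : t + 2 + (j - (t + 2)) = j := by omega
    rw [e]; omega
  obtain ⟨m, hm1, hm2, hm3⟩ := ivt_aux k v A (j - (t + 2)) (t + 2) (v (t + 1))
    (by omega) hno h2'
  have := inj m (t + 1) (by omega) (by omega) hm3
  omega

/-- Main structural lemma, phrased over ℕ-indexed sequences. -/
private lemma struct_aux (k : ℕ) (hk : 1 ≤ k) (v : ℕ → ℕ)
    (A : ∀ t, t + 1 < k → v t ≤ v (t + 1) + 1)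
    (inj : ∀ s t, s < k → t < k → v s = v t → s = t)
    (hm : ∀ t, t + 1 < k → ∃ j, t < j ∧ j < k ∧ v j ≤ v t + 1) :
    ∃ a i, 1 ≤ i ∧ i ≤ k ∧ ∀ t, t < k →
      v t = if t < i - 1 then a + t else a + k - 1 - (t - (i - 1)) := by
  by_cases hall : ∀ t, t + 1 < k → v (t + 1) = v t + 1
  · have hv : ∀ t, t < k → v t = v 0 + t := by
      intro t
      induction t with
      | zero => intro _; omega
      | succ t ih =>
        intro h
        have h1 := hall t (by omega)
        have h2 := ih (by omega)
        omega
    refine ⟨v 0, k, hk, le_refl k, ?_⟩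
    intro t ht
    have := hv t ht
    split_ifs with h <;> omega
  · push_neg at hall
    have hex : ∃ t, t + 1 < k ∧ v (t + 1) ≠ v t + 1 := hall
    set q := Nat.find hex with hqdef
    obtain ⟨hq1, hq2⟩ := Nat.find_spec hex
    rw [← hqdef] at hq1 hq2
    have hminq : ∀ t, t < q → t + 1 < k → v (t + 1) = v t + 1 := by
      intro t htq htk
      rw [hqdef] at htq
      have := Nat.find_min hex htq
      push_neg at this
      exact this htk
    have hasc : ∀ t, t ≤ q → v t = v 0 + t := by
      intro t
      induction t with
      | zero => intro _; omega
      | succ t ih =>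
        intro h
        have h1 := hminq t (by omega) (by omega)
        have h2 := ih (by omega)
        omega
    have hne0 : v (q + 1) ≠ v q := fun h => by
      have := inj (q + 1) q (by omega) (by omega) h; omega
    rcases lt_or_gt_of_ne hne0 with hlt | hgt
    · -- first irregular step is a descent: then everything descends, q = 0
      have hq0 : q = 0 := by
        by_contra h0
        have hA := A q hq1
        have e1 : v (q + 1) = v q - 1 := by omega
        have e2 : v (q - 1) = v 0 + (q - 1) := hasc (q - 1) (by omega)
        have e3 : v q = v 0 + q := hasc q (le_refl q)
        have hvv : v (q + 1) = v (q - 1) := by omega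
        have := inj (q + 1) (q - 1) (by omega) (by omega) hvv
        omega
      have hdall : ∀ s, s + 1 < k → v (s + 1) < v s := by
        intro s hs
        exact persist_aux k v A inj hm q hq1 hlt s (by omega) hs
      have hdec : ∀ t, t < k → v t + t = v 0 := by
        intro t
        induction t with
        | zero => intro _; omega
        | succ t ih =>
          intro h
          have h1 := hdall t h
          have h2 := A t h
          have h3 := ih (by omega)
          omega
      refine ⟨v 0 - (k - 1), 1, le_refl 1, hk, ?_⟩
      intro t ht
      have h1 := hdec t ht
      have h2 := hdec (k - 1) (by omega)
      split_ifs with h <;> omega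
    · -- first irregular step is a jump of size ≥ 2
      have hgap : v q + 2 ≤ v (q + 1) := by omega
      have hq2k : q + 2 < k := by
        by_contra h0
        obtain ⟨j, hj1, hj2, hj3⟩ := hm q hq1
        have hje : j = q + 1 := by omega
        rw [hje] at hj3
        omega
      have hd1 : v (q + 2) < v (q + 1) := gap_aux k v A inj hm q hq2k hgap
      have hdall : ∀ s, q + 1 ≤ s → s + 1 < k → v (s + 1) < v s := by
        intro s hs1 hs2
        exact persist_aux k v A inj hm (q + 1) hq2k hd1 s hs1 hs2
      have hdec : ∀ t, q + 1 ≤ t → t < k → v t + (t - (q + 1)) = v (q + 1) := by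
        intro t ht1
        induction t, ht1 using Nat.le_induction with
        | base => intro _; omega
        | succ t ht ih =>
          intro h
          have h1 := hdall t ht (by omega)
          have h2 := A t (by omega)
          have h3 := ih (by omega)
          omega
      have hvq : v q = v 0 + q := hasc q (le_refl q)
      have hlow : v 0 + q + 1 ≤ v (k - 1) := by
        by_contra h0
        push_neg at h0
        have h2' : v (q + 1 + (k - 1 - (q + 1))) ≤ v q := by
          have e : q + 1 + (k - 1 - (q + 1)) = k - 1 := by omega
          rw [e]; omega
        obtain ⟨m, hm1, hm2, hm3⟩ := ivt_aux k v A (k - 1 - (q + 1)) (q + 1) (v q)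
          (by omega) (by omega) h2'
        have := inj m q (by omega) (by omega) hm3
        omega
      have hup : v (k - 1) ≤ v 0 + q + 1 := by
        obtain ⟨j, hj1, hj2, hj3⟩ := hm q hq1
        have hjne : j ≠ q + 1 := fun h => by rw [h] at hj3; omega
        have h1 := hdec j (by omega) hj2
        have h2 := hdec (k - 1) (by omega) (by omega)
        omega
      have hvk : v (q + 1) = v 0 + k - 1 := by
        have h2 := hdec (k - 1) (by omega) (by omega)
        omega
      refine ⟨v 0, q + 2, by omega, by omega, ?_⟩
      intro t ht
      by_cases h : t ≤ q
      · have := hasc t h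
        split_ifs with h2 <;> omega
      · have h1 := hdec t (by omega) ht
        split_ifs with h2 <;> omega

/-- For the poset `P_n` on `[n]` with `i <_P j ↔ i + 2 ≤ j`, any
powersum permutation `w` of a subset `S ⊆ [n]` has `S` an interval
`{a, ..., a+k-1}` and `w` increases by 1 up to position `i-1` and then lists the
remaining elements in decreasing order from the maximum. -/
theorem stmt_5 (n k : ℕ) (hk : 1 ≤ k) (S : Finset ℕ) (w : Fin k → ℕ)
    (hS : ∀ x ∈ S, 1 ≤ x ∧ x ≤ n)
    (hinj : Function.Injective w)
    (himg : S = Finset.image w Finset.univ)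
    (hdesc : ∀ i : Fin k, ∀ h : (i : ℕ) + 1 < k, ¬ (w ⟨(i : ℕ) + 1, h⟩ + 2 ≤ w i))
    (hmin : ∀ i : Fin k, (i : ℕ) + 1 < k → ∃ j : Fin k, i < j ∧ ¬ (w i + 2 ≤ w j)) :
    ∃ a, S = Finset.Ico a (a + k) ∧
      ∃ i, 1 ≤ i ∧ i ≤ k ∧ ∀ t : Fin k,
        w t = if (t : ℕ) < i - 1 then a + (t : ℕ)
              else a + k - 1 - ((t : ℕ) - (i - 1)) := by
  set v : ℕ → ℕ := fun t => if h : t < k then w ⟨t, h⟩ else 0 with hvdef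
  have hvw : ∀ m (h : m < k), v m = w ⟨m, h⟩ := by
    intro m h
    rw [hvdef]
    exact dif_pos h
  have hA : ∀ t, t + 1 < k → v t ≤ v (t + 1) + 1 := by
    intro t ht
    have h1 : t < k := by omega
    have h2 : ¬ (w ⟨t + 1, ht⟩ + 2 ≤ w ⟨t, h1⟩) := hdesc ⟨t, h1⟩ ht
    rw [hvw t h1, hvw (t + 1) ht]
    omega
  have hinjv : ∀ s t, s < k → t < k → v s = v t → s = t := by
    intro s t hs ht h
    rw [hvw s hs, hvw t ht] at h
    have h2 := hinj h
    simpa using h2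
  have hmv : ∀ t, t + 1 < k → ∃ j, t < j ∧ j < k ∧ v j ≤ v t + 1 := by
    intro t ht
    have h1 : t < k := by omega
    obtain ⟨j, hj1, hj2⟩ := hmin ⟨t, h1⟩ ht
    have hj1' : t < (j : ℕ) := hj1
    have hj2' : ¬ (w ⟨t, h1⟩ + 2 ≤ w ⟨j.1, j.2⟩) := hj2
    refine ⟨j.1, hj1', j.2, ?_⟩
    rw [hvw j.1 j.2, hvw t h1]
    omega
  obtain ⟨a, i, hi1, hi2, hform⟩ := struct_aux k hk v hA hinjv hmv
  have key : ∀ m (hmk : m < k),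
      w ⟨m, hmk⟩ = if m < i - 1 then a + m else a + k - 1 - (m - (i - 1)) := by
    intro m hmk
    have := hform m hmk
    rwa [hvw m hmk] at this
  have key' : ∀ t : Fin k,
      w t = if (t : ℕ) < i - 1 then a + (t : ℕ)
            else a + k - 1 - ((t : ℕ) - (i - 1)) := by
    intro t
    have := key t.1 t.2
    rwa [show (⟨t.1, t.2⟩ : Fin k) = t from rfl] at this
  refine ⟨a, ?_, i, hi1, hi2, key'⟩
  rw [himg]
  ext x
  simp only [Finset.mem_image, Finset.mem_univ, true_and, Finset.mem_Ico]
  constructor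
  · rintro ⟨t, rfl⟩
    have h := key' t
    have ht := t.2
    rw [h]
    split_ifs with h2 <;> omega
  · rintro ⟨h1, h2⟩
    by_cases hx : x < a + (i - 1)
    · have hlt' : x - a < k := by omega
      refine ⟨⟨x - a, hlt'⟩, ?_⟩
      rw [key (x - a) hlt']
      split_ifs with h3 <;> omega
    · have hlt' : (i - 1) + (a + k - 1 - x) < k := by omega
      refine ⟨⟨(i - 1) + (a + k - 1 - x), hlt'⟩, ?_⟩
      rw [key ((i - 1) + (a + k - 1 - x)) hlt']
      split_ifs with h3 <;> omega
end

section
/- Let P_n be the poset on [n] with i <_P j iff i + 2 ≤ j, and let S = {a, a+1, ..., a+k−1} ⊆ [n] with k ≥ 1. Then the number of powersum permutations of S for P_n is exactly k. -/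
/-- The `m`-th model permutation of the interval `{a, ..., a+k-1}`:
increase `a, a+1, ..., a+m-1`, then decrease `a+k-1, a+k-2, ..., a+m`. -/
def psModel (a k : ℕ) (m : Fin k) : Fin k → ℕ :=
  fun i => if (i : ℕ) < (m : ℕ) then a + i else a + k - 1 - ((i : ℕ) - (m : ℕ))

/-- Main combinatorial lemma at the level of ℕ-indexed sequences:
any sequence satisfying the four conditions is one of the model permutations. -/
lemma forward_nat (a k : ℕ) (ha : 1 ≤ a) (hk : 1 ≤ k) (W : ℕ → ℕ)
    (hinj : ∀ i j, i < k → j < k → W i = W j → i = j)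
    (hrange : ∀ i, i < k → a ≤ W i ∧ W i < a + k)
    (hstep : ∀ i, i + 1 < k → W i ≤ W (i + 1) + 1)
    (hmin : ∀ i, i + 1 < k → ∃ j, i < j ∧ j < k ∧ W j ≤ W i + 1) :
    ∃ m, m < k ∧ ∀ i, i < k → W i = if i < m then a + i else a + k - 1 - (i - m) := by
  -- surjectivity onto Ico a (a+k)
  have hsurj : ∀ v, a ≤ v → v < a + k → ∃ i, i < k ∧ W i = v := by
    intro v hv1 hv2
    have himg : (Finset.range k).image W ⊆ Finset.Ico a (a + k) := by
      intro x hx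
      simp only [Finset.mem_image, Finset.mem_range] at hx
      obtain ⟨i, hi, rfl⟩ := hx
      rw [Finset.mem_Ico]
      exact hrange i hi
    have hcard : ((Finset.range k).image W).card = k := by
      rw [Finset.card_image_of_injOn, Finset.card_range]
      intro i hi j hj hij
      exact hinj i j (by simpa using hi) (by simpa using hj) hij
    have heq : (Finset.range k).image W = Finset.Ico a (a + k) :=
      Finset.eq_of_subset_of_card_le himg (by rw [hcard, Nat.card_Ico]; omega)
    have hv : v ∈ (Finset.range k).image W := by
      rw [heq, Finset.mem_Ico]; exact ⟨hv1, hv2⟩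
    simp only [Finset.mem_image, Finset.mem_range] at hv
    obtain ⟨i, hi, he⟩ := hv
    exact ⟨i, hi, he⟩
  -- intermediate value lemma
  have ivt : ∀ d p v, p + d < k → W (p + d) ≤ v → v ≤ W p →
      ∃ r, p ≤ r ∧ r ≤ p + d ∧ W r = v := by
    intro d
    induction d with
    | zero =>
      intro p v hp h1 h2
      simp only [Nat.add_zero] at h1
      exact ⟨p, le_refl _, by omega, by omega⟩
    | succ d ih =>
      intro p v hp h1 h2
      by_cases hv : W p = v
      · exact ⟨p, le_refl _, by omega, hv⟩
      · have hlt : v < W p := lt_of_le_of_ne h2 (fun h => hv h.symm)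
        have hs := hstep p (by omega)
        have h2' : v ≤ W (p + 1) := by omega
        have harg : p + (d + 1) = p + 1 + d := by omega
        rw [harg] at h1 hp
        obtain ⟨r, hr1, hr2, hr3⟩ := ih (p + 1) v hp h1 h2'
        exact ⟨r, by omega, by omega, hr3⟩
  have ivt' : ∀ p q v, p ≤ q → q < k → W q ≤ v → v ≤ W p →
      ∃ r, p ≤ r ∧ r ≤ q ∧ W r = v := by
    intro p q v h1 h2 h3 h4
    have hq : p + (q - p) = q := by omega
    rw [← hq] at h3 h2
    obtain ⟨r, hr1, hr2, hr3⟩ := ivt (q - p) p v h2 h3 h4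
    exact ⟨r, hr1, by omega, hr3⟩
  -- decrease propagation
  have prop : ∀ i, i + 2 < k → W (i + 1) < W i → W (i + 2) < W (i + 1) := by
    intro i h2k hdec
    by_contra hge
    push_neg at hge
    have e1 : W i = W (i + 1) + 1 := by
      have := hstep i (by omega); omega
    have ne1 : W (i + 2) ≠ W (i + 1) := by
      intro h; have := hinj _ _ (by omega) (by omega) h; omega
    have ne2 : W (i + 2) ≠ W i := by
      intro h; have := hinj _ _ (by omega) (by omega) h; omega
    have e2 : W (i + 1) + 2 ≤ W (i + 2) := by omega
    obtain ⟨r, hr1, hr2, hr3⟩ := hmin (i + 1) (by omega)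
    have ne3 : W r ≠ W (i + 1) := by
      intro h; have := hinj _ _ hr2 (by omega) h; omega
    have ne4 : W r ≠ W i := by
      intro h; have := hinj _ _ hr2 (by omega) h; omega
    have hrlt : W r < W (i + 1) := by omega
    have hrne : i + 2 < r := by
      rcases Nat.lt_or_ge (i + 2) r with h | h
      · exact h
      · have hre : r = i + 2 := by omega
        rw [hre] at hrlt
        omega
    obtain ⟨s, hs1, hs2, hs3⟩ := ivt' (i + 2) r (W (i + 1)) (by omega) hr2 (by omega) (by omega)
    have := hinj s (i + 1) (by omega) (by omega) hs3
    omega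
  -- position of the maximum
  obtain ⟨m, hm, hWm⟩ := hsurj (a + k - 1) (by omega) (by omega)
  -- no decrease before m
  have nodec : ∀ i, i + 1 ≤ m → W i < W (i + 1) := by
    intro i him
    by_contra hge
    push_neg at hge
    have hne : W (i + 1) ≠ W i := by
      intro h; have := hinj _ _ (by omega) (by omega) h; omega
    have hlt : W (i + 1) < W i := lt_of_le_of_ne hge hne
    have key : ∀ j, i + 1 ≤ j → j < k → W j < W i ∧ (j + 1 < k → W (j + 1) < W j) := by
      intro j hj
      induction j, hj using Nat.le_induction with
      | base =>
        intro hjk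
        exact ⟨hlt, fun h2 => prop i h2 hlt⟩
      | succ j hj ih =>
        intro hjk
        have h' := ih (by omega)
        have hd : W (j + 1) < W j := h'.2 hjk
        exact ⟨lt_trans hd h'.1, fun h2 => prop j h2 hd⟩
    have h1 := (key m (by omega) hm).1
    have h2 := (hrange i (by omega)).2
    omega
  -- tail: from m on, decreasing by exactly 1
  have tail : ∀ j, m ≤ j → j < k → W j = a + k - 1 - (j - m) := by
    have Q : ∀ j, m ≤ j → ∀ s, m ≤ s → s ≤ j → s < k → W s = a + k - 1 - (s - m) := by
      intro j hj
      induction j, hj using Nat.le_induction with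
      | base =>
        intro s h1 h2 _
        have : s = m := by omega
        subst this
        simpa using hWm
      | succ j hj ih =>
        intro s h1 h2 hs
        rcases Nat.lt_or_ge s (j + 1) with hlt | hge
        · exact ih s h1 (by omega) hs
        · have hse : s = j + 1 := by omega
          subst hse
          have hWj : W j = a + k - 1 - (j - m) := ih j hj (le_refl _) (by omega)
          have hst := hstep j (by omega)
          have hub : W (j + 1) < W j := by
            by_contra hge'
            push_neg at hge'
            have hne : W (j + 1) ≠ W j := by
              intro h; have := hinj _ _ hs (by omega) h; omega
            have hr := hrange (j + 1) hs
            set s' := m + (a + k - 1 - W (j + 1)) with hs'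
            have hs'j : s' ≤ j := by omega
            have hWs' : W s' = W (j + 1) := by
              have := ih s' (by omega) hs'j (by omega)
              omega
            have := hinj s' (j + 1) (by omega) hs hWs'
            omega
          have hrj := hrange j (by omega)
          omega
    intro j hj hjk
    exact Q j hj j hj (le_refl _) hjk
  -- prefix values below a + m
  have prebound : ∀ i, i < m → W i < a + m := by
    intro i him
    by_contra h
    push_neg at h
    have hik : i < k := by omega
    have hr := hrange i hik
    set s := m + (a + k - 1 - W i) with hs
    have hsk : s < k := by omega
    have hWs : W s = W i := by
      have := tail s (by omega) hsk
      omega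
    have := hinj s i hsk hik hWs
    omega
  -- strict increase on prefix gives lower bound
  have preinc : ∀ i j, i ≤ j → j ≤ m → W i + (j - i) ≤ W j := by
    intro i j hij
    induction j, hij using Nat.le_induction with
    | base => intro _; omega
    | succ j hj ih =>
      intro hjm
      have h1 := ih (by omega)
      have h2 := nodec j (by omega)
      omega
  have prefix_eq : ∀ i, i < m → W i = a + i := by
    intro i him
    have h1 := preinc 0 i (by omega) (by omega)
    have h2 := (hrange 0 (by omega)).1
    have h3 := preinc i (m - 1) (by omega) (by omega)
    have h4 := prebound (m - 1) (by omega)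
    omega
  refine ⟨m, hm, fun i hik => ?_⟩
  by_cases him : i < m
  · rw [if_pos him]; exact prefix_eq i him
  · rw [if_neg him]; exact tail i (by omega) hik

/-- For the poset `P_n` with `i <_P j ↔ i + 2 ≤ j` and an interval
`S = {a, ..., a+k-1} ⊆ [n]`, the number of powersum permutations of `S` is `k`. -/
theorem stmt_6 (n a k : ℕ) (ha : 1 ≤ a) (hk : 1 ≤ k) (hn : a + k - 1 ≤ n) :
    Set.ncard {w : Fin k → ℕ |
      Function.Injective w ∧
      (∀ t, w t ∈ Finset.Ico a (a + k)) ∧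
      (∀ i : Fin k, ∀ h : (i : ℕ) + 1 < k, ¬ (w ⟨(i : ℕ) + 1, h⟩ + 2 ≤ w i)) ∧
      (∀ i : Fin k, (i : ℕ) + 1 < k → ∃ j : Fin k, i < j ∧ ¬ (w i + 2 ≤ w j))} = k := by
  have hset : {w : Fin k → ℕ |
      Function.Injective w ∧
      (∀ t, w t ∈ Finset.Ico a (a + k)) ∧
      (∀ i : Fin k, ∀ h : (i : ℕ) + 1 < k, ¬ (w ⟨(i : ℕ) + 1, h⟩ + 2 ≤ w i)) ∧
      (∀ i : Fin k, (i : ℕ) + 1 < k → ∃ j : Fin k, i < j ∧ ¬ (w i + 2 ≤ w j))} =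
      Set.range (psModel a k) := by
    ext w
    simp only [Set.mem_setOf_eq, Set.mem_range]
    constructor
    · rintro ⟨h1, h2, h3, h4⟩
      -- translate to a ℕ-indexed sequence
      set W : ℕ → ℕ := fun i => if h : i < k then w ⟨i, h⟩ else 0 with hW
      have hWeq : ∀ (i : ℕ) (h : i < k), W i = w ⟨i, h⟩ := fun i h => dif_pos h
      have hinj : ∀ i j, i < k → j < k → W i = W j → i = j := by
        intro i j hi hj hij
        rw [hWeq i hi, hWeq j hj] at hij
        have := h1 hij
        exact congrArg Fin.val this
      have hrange : ∀ i, i < k → a ≤ W i ∧ W i < a + k := by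
        intro i hi
        rw [hWeq i hi]
        have := h2 ⟨i, hi⟩
        rw [Finset.mem_Ico] at this
        exact this
      have hstep : ∀ i, i + 1 < k → W i ≤ W (i + 1) + 1 := by
        intro i hik
        have hi : i < k := by omega
        have h3' : ¬ (w ⟨i + 1, hik⟩ + 2 ≤ w ⟨i, hi⟩) := h3 ⟨i, hi⟩ hik
        rw [hWeq i hi, hWeq (i + 1) hik]
        omega
      have hmin : ∀ i, i + 1 < k → ∃ j, i < j ∧ j < k ∧ W j ≤ W i + 1 := by
        intro i hik
        have hi : i < k := by omega
        obtain ⟨j, hj1, hj2⟩ := h4 ⟨i, hi⟩ hik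
        refine ⟨(j : ℕ), hj1, j.isLt, ?_⟩
        rw [hWeq i hi, hWeq (j : ℕ) j.isLt]
        simp only [Fin.eta]
        omega
      obtain ⟨m, hm, hmod⟩ := forward_nat a k ha hk W hinj hrange hstep hmin
      refine ⟨⟨m, hm⟩, funext fun i => ?_⟩
      have := hmod (i : ℕ) i.isLt
      rw [hWeq (i : ℕ) i.isLt] at this
      simp only [Fin.eta] at this
      simp only [psModel]
      rw [← this]
    · rintro ⟨m, rfl⟩
      have hmk : (m : ℕ) < k := m.isLt
      refine ⟨?_, ?_, ?_, ?_⟩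
      · intro i j hij
        have hik : (i : ℕ) < k := i.isLt
        have hjk : (j : ℕ) < k := j.isLt
        simp only [psModel] at hij
        apply Fin.ext
        split_ifs at hij <;> omega
      · intro t
        have htk : (t : ℕ) < k := t.isLt
        rw [Finset.mem_Ico]
        simp only [psModel]
        split_ifs <;> omega
      · intro i h
        have hik : (i : ℕ) < k := i.isLt
        simp only [psModel]
        split_ifs <;> omega
      · intro i h
        have hik : (i : ℕ) < k := i.isLt
        by_cases h1 : (i : ℕ) < (m : ℕ)
        · by_cases h2 : (i : ℕ) + 1 < (m : ℕ)
          · refine ⟨⟨(i : ℕ) + 1, h⟩, by simp [Fin.lt_def], ?_⟩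
            simp only [psModel]
            split_ifs <;> omega
          · refine ⟨⟨k - 1, by omega⟩, by rw [Fin.lt_def]; simp; omega, ?_⟩
            simp only [psModel]
            split_ifs <;> omega
        · refine ⟨⟨(i : ℕ) + 1, h⟩, by simp [Fin.lt_def], ?_⟩
          simp only [psModel]
          split_ifs <;> omega
  rw [hset]
  have hMinj : Function.Injective (psModel a k) := by
    intro m m' h
    have hm := m.isLt
    have hm' := m'.isLt
    have h1 := congrFun h m
    simp only [psModel] at h1
    apply Fin.ext
    split_ifs at h1 <;> omega
  rw [← Set.image_univ, Set.ncard_image_of_injective _ hMinj, Set.ncard_univ,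
    Nat.card_eq_fintype_card, Fintype.card_fin]
end

section
/- Let P_n be the poset on [n] with i <_P j iff i + 2 ≤ j, let S = {a, ..., a+k−1} ⊆ [n], and for a word w with distinct entries define inv(w) = #{(i,j) : i < j, w_i > w_j, w_i and w_j incomparable in P_n}. Then the sum of q^{inv(w)} over all powersum permutations w of S for P_n equals the q-integer [k]_q = 1 + q + ... + q^{k−1}. Equivalently, if the maximum element a+k−1 occurs in position j of the powersum permutation w, then inv(w) = k − j. -/
open scoped Classical

/-- The word `t ↦ a + σ t` (listing the interval `{a, ..., a+k-1}`) is a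
powersum word for the poset `P_n` (`x <_P y ↔ x + 2 ≤ y`): no `P`-descents and
no nontrivial right-to-left `P`-minima. -/
def IsPowersumPerm (a k : ℕ) (σ : Equiv.Perm (Fin k)) : Prop :=
  (∀ i : Fin k, ∀ h : (i : ℕ) + 1 < k,
      ¬ ((a + (σ ⟨(i : ℕ) + 1, h⟩ : ℕ)) + 2 ≤ a + (σ i : ℕ))) ∧
  (∀ i : Fin k, (i : ℕ) + 1 < k →
      ∃ j : Fin k, i < j ∧ ¬ ((a + (σ i : ℕ)) + 2 ≤ a + (σ j : ℕ)))

/-- The Shareshian–Wachs inversion statistic of the word `t ↦ a + σ t` for the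
poset `P_n`: pairs of positions `i < j` whose letters `w_i > w_j` are
incomparable in `P_n`. -/
noncomputable def invPath (a k : ℕ) (σ : Equiv.Perm (Fin k)) : ℕ :=
  (Finset.univ.filter fun p : Fin k × Fin k =>
    p.1 < p.2 ∧ a + (σ p.2 : ℕ) < a + (σ p.1 : ℕ) ∧
    ¬ ((a + (σ p.1 : ℕ)) + 2 ≤ a + (σ p.2 : ℕ)) ∧
    ¬ ((a + (σ p.2 : ℕ)) + 2 ≤ a + (σ p.1 : ℕ))).card

def hookFun (k : ℕ) (m : Fin k) : Fin k → Fin k := fun i =>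
  if _h : (i : ℕ) < (m : ℕ) then i
  else ⟨(m : ℕ) + (k - 1) - (i : ℕ), by have := i.isLt; have := m.isLt; omega⟩

lemma hookFun_val (k : ℕ) (m : Fin k) (i : Fin k) :
    ((hookFun k m i : Fin k) : ℕ) =
      if (i : ℕ) < (m : ℕ) then (i : ℕ) else (m : ℕ) + (k - 1) - (i : ℕ) := by
  unfold hookFun
  split <;> simp_all

lemma hookFun_invol (k : ℕ) (m : Fin k) : Function.Involutive (hookFun k m) := by
  intro i
  apply Fin.ext
  rw [hookFun_val, hookFun_val]
  have := i.isLt; have := m.isLt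
  split_ifs <;> omega

def hookPerm (k : ℕ) (m : Fin k) : Equiv.Perm (Fin k) :=
  Function.Involutive.toPerm _ (hookFun_invol k m)

lemma hookPerm_val (k : ℕ) (m : Fin k) (i : Fin k) :
    ((hookPerm k m i : Fin k) : ℕ) =
      if (i : ℕ) < (m : ℕ) then (i : ℕ) else (m : ℕ) + (k - 1) - (i : ℕ) :=
  hookFun_val k m i

lemma hookPerm_inj (k : ℕ) : Function.Injective (hookPerm k) := by
  intro m m' h
  have hk : 0 < k := m.pos
  have h1 := congrArg (fun τ : Equiv.Perm (Fin k) => ((τ ⟨k - 1, by omega⟩ : Fin k) : ℕ)) h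
  simp only [hookPerm_val] at h1
  have := m.isLt; have := m'.isLt
  apply Fin.ext
  split_ifs at h1 <;> omega

lemma hook_isPowersum (a k : ℕ) (m : Fin k) : IsPowersumPerm a k (hookPerm k m) := by
  have hm := m.isLt
  constructor
  · intro i h
    have hi := i.isLt
    rw [hookPerm_val, hookPerm_val]
    simp only
    split_ifs <;> omega
  · intro i h
    have hi := i.isLt
    by_cases hc : (i : ℕ) + 1 < (m : ℕ)
    · refine ⟨⟨(i : ℕ) + 1, h⟩, by simp [Fin.lt_def], ?_⟩
      rw [hookPerm_val, hookPerm_val]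
      simp only
      split_ifs <;> omega
    · refine ⟨⟨k - 1, by omega⟩, by simp [Fin.lt_def]; omega, ?_⟩
      rw [hookPerm_val, hookPerm_val]
      simp only
      split_ifs <;> omega

lemma invPath_hook (a k : ℕ) (m : Fin k) : invPath a k (hookPerm k m) = k - 1 - (m : ℕ) := by
  have hm := m.isLt
  unfold invPath
  have hfc : (Finset.univ.filter fun p : Fin k × Fin k =>
      p.1 < p.2 ∧ a + (hookPerm k m p.2 : ℕ) < a + (hookPerm k m p.1 : ℕ) ∧
      ¬ ((a + (hookPerm k m p.1 : ℕ)) + 2 ≤ a + (hookPerm k m p.2 : ℕ)) ∧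
      ¬ ((a + (hookPerm k m p.2 : ℕ)) + 2 ≤ a + (hookPerm k m p.1 : ℕ))) =
      (Finset.univ.filter fun p : Fin k × Fin k =>
        (m : ℕ) ≤ (p.1 : ℕ) ∧ (p.2 : ℕ) = (p.1 : ℕ) + 1) := by
    apply Finset.filter_congr
    intro p _
    have h1 := p.1.isLt
    have h2 := p.2.isLt
    rw [hookPerm_val, hookPerm_val]
    simp only [Fin.lt_def]
    split_ifs <;> omega
  rw [hfc]
  rw [show k - 1 - (m : ℕ) = (Finset.range (k - 1 - (m : ℕ))).card from (Finset.card_range _).symm]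
  apply Finset.card_bij' (fun (p : Fin k × Fin k) (_ : p ∈ Finset.filter
        (fun p : Fin k × Fin k => (m : ℕ) ≤ (p.1 : ℕ) ∧ (p.2 : ℕ) = (p.1 : ℕ) + 1)
        Finset.univ) => (p.1 : ℕ) - (m : ℕ))
      (fun t (ht : t ∈ Finset.range (k - 1 - (m : ℕ))) =>
        ((⟨(m : ℕ) + t, by simp only [Finset.mem_range] at ht; omega⟩,
          ⟨(m : ℕ) + t + 1, by simp only [Finset.mem_range] at ht; omega⟩) : Fin k × Fin k))
  · intro p hp
    simp only [Finset.mem_range] at hp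
    simp only [Finset.mem_filter, Finset.mem_univ, true_and]
    constructor <;> simp <;> omega
  · intro t ht
    simp only [Finset.mem_filter, Finset.mem_univ, true_and] at ht
    have h1 := t.1.isLt
    apply Prod.ext <;> apply Fin.ext <;> simp <;> omega
  · intro p hp
    simp only [Finset.mem_range] at hp
    simp
  · intro t ht
    simp only [Finset.mem_filter, Finset.mem_univ, true_and] at ht
    have h1 := t.1.isLt
    have h2 := t.2.isLt
    simp only [Finset.mem_range]
    omega

lemma powersum_eq_hook (a k : ℕ) (hk : 1 ≤ k) (σ : Equiv.Perm (Fin k))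
    (h : IsPowersumPerm a k σ) :
    σ = hookPerm k (σ⁻¹ ⟨k - 1, by omega⟩) := by
  obtain ⟨hd, hr⟩ := h
  set m : Fin k := σ⁻¹ ⟨k - 1, by omega⟩ with hmdef
  have hmlt := m.isLt
  have hσm : (σ m : ℕ) = k - 1 := by
    rw [hmdef, Equiv.Perm.inv_def, Equiv.apply_symm_apply]
  -- Step A: the descending tail
  have hA : ∀ t, ∀ ht : (m : ℕ) + t < k, (σ ⟨(m : ℕ) + t, ht⟩ : ℕ) = k - 1 - t := by
    intro t
    induction t using Nat.strong_induction_on with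
    | _ t ih =>
      match t with
      | 0 =>
        intro ht
        have : (⟨(m : ℕ) + 0, ht⟩ : Fin k) = m := Fin.ext (by simp)
        rw [this, hσm]
        omega
      | (t + 1) =>
        intro ht
        show (σ ⟨(m : ℕ) + t + 1, ht⟩ : ℕ) = k - 1 - (t + 1)
        have ht' : (m : ℕ) + t < k := by omega
        have hprev : (σ ⟨(m : ℕ) + t, ht'⟩ : ℕ) = k - 1 - t := ih t (by omega) ht'
        have hdes : ¬ (a + (σ ⟨(m : ℕ) + t + 1, ht⟩ : ℕ) + 2 ≤
            a + (σ ⟨(m : ℕ) + t, ht'⟩ : ℕ)) := hd ⟨(m : ℕ) + t, ht'⟩ ht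
        set v := (σ ⟨(m : ℕ) + t + 1, ht⟩ : ℕ) with hv
        have hvlt : v < k := (σ _).isLt
        have hdes' : ¬ (a + v + 2 ≤ a + (k - 1 - t)) := by
          rw [hprev] at hdes
          exact hdes
        by_cases hup : k - 1 - t ≤ v
        · exfalso
          set s := k - 1 - v with hs
          have hst : s ≤ t := by omega
          have hseq : (σ ⟨(m : ℕ) + s, by omega⟩ : ℕ) = k - 1 - s :=
            ih s (by omega) (by omega)
          have : σ ⟨(m : ℕ) + s, by omega⟩ = σ ⟨(m : ℕ) + t + 1, ht⟩ :=
            Fin.ext (by rw [hseq, ← hv]; omega)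
          have := σ.injective this
          rw [Fin.mk.injEq] at this
          omega
        · omega
  -- Step B: the identity prefix
  have hB : ∀ d, ∀ j, ∀ hj : j < k, (m : ℕ) - d ≤ j → j < (m : ℕ) →
      (σ ⟨j, hj⟩ : ℕ) = j := by
    intro d
    induction d with
    | zero => intro j hj h1 h2; omega
    | succ d ih =>
      intro j hj h1 h2
      by_cases hc : (m : ℕ) - d ≤ j
      · exact ih j hj hc h2
      · have hjm : j + d + 1 = (m : ℕ) := by omega
        obtain ⟨j', hjj', hcmp⟩ := hr ⟨j, hj⟩ (by simp; omega)
        have hj'v : j < (j' : ℕ) := hjj'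
        have hj'lt := j'.isLt
        have hlow : j + 1 ≤ (σ j' : ℕ) := by
          by_cases hcase : (j' : ℕ) < (m : ℕ)
          · have he : (σ ⟨(j' : ℕ), j'.isLt⟩ : ℕ) = (j' : ℕ) :=
              ih (j' : ℕ) j'.isLt (by omega) hcase
            simp only [Fin.eta] at he
            omega
          · have he := hA ((j' : ℕ) - (m : ℕ)) (by omega)
            have he2 : (⟨(m : ℕ) + ((j' : ℕ) - (m : ℕ)), by omega⟩ : Fin k) = j' :=
              Fin.ext (show (m : ℕ) + ((j' : ℕ) - (m : ℕ)) = (j' : ℕ) by omega)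
            rw [he2] at he
            omega
        have hupp : (σ j' : ℕ) ≤ (σ ⟨j, hj⟩ : ℕ) + 1 := by
          omega
        have hub : (σ ⟨j, hj⟩ : ℕ) ≤ j := by
          by_contra hgt
          push_neg at hgt
          set v := (σ ⟨j, hj⟩ : ℕ) with hv
          have hvk : v < k := (σ _).isLt
          by_cases hvm : v < (m : ℕ)
          · have he : (σ ⟨v, hvk⟩ : ℕ) = v := ih v hvk (by omega) hvm
            have : σ ⟨v, hvk⟩ = σ ⟨j, hj⟩ := Fin.ext (by rw [he, ← hv])
            have := σ.injective this
            rw [Fin.mk.injEq] at this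
            omega
          · have he := hA (k - 1 - v) (by omega)
            have : σ ⟨(m : ℕ) + (k - 1 - v), by omega⟩ = σ ⟨j, hj⟩ :=
              Fin.ext (by rw [he, ← hv]; omega)
            have := σ.injective this
            rw [Fin.mk.injEq] at this
            omega
        omega
  apply Equiv.ext
  intro i
  apply Fin.ext
  rw [hookPerm_val]
  have hi := i.isLt
  by_cases hc : (i : ℕ) < (m : ℕ)
  · rw [if_pos hc]
    have := hB (m : ℕ) (i : ℕ) i.isLt (by omega) hc
    simpa using this
  · rw [if_neg hc]
    have he := hA ((i : ℕ) - (m : ℕ)) (by omega)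
    have he2 : (⟨(m : ℕ) + ((i : ℕ) - (m : ℕ)), by omega⟩ : Fin k) = i :=
      Fin.ext (show (m : ℕ) + ((i : ℕ) - (m : ℕ)) = (i : ℕ) by omega)
    rw [he2] at he
    omega

/-- The sum of `q^{inv(w)}` over all powersum permutations `w` of
the interval `S = {a, ..., a+k-1} ⊆ [n]` equals the q-integer
`[k]_q = 1 + q + ... + q^{k-1}`.  Equivalently, if the maximum `a+k-1` occurs in
(1-indexed) position `j` of `w`, then `inv(w) = k - j`. -/
theorem stmt_7 {R : Type*} [CommSemiring R] (q : R) (n a k : ℕ)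
    (ha : 1 ≤ a) (hk : 1 ≤ k) (hn : a + k - 1 ≤ n) :
    (∑ σ ∈ Finset.univ.filter (IsPowersumPerm a k), q ^ invPath a k σ) =
      ∑ i ∈ Finset.range k, q ^ i ∧
    ∀ σ : Equiv.Perm (Fin k), IsPowersumPerm a k σ →
      ∀ p : Fin k, a + (σ p : ℕ) = a + k - 1 →
        invPath a k σ = k - 1 - (p : ℕ) := by
  constructor
  · have hset : (Finset.univ.filter (IsPowersumPerm a k)) =
        Finset.univ.image (hookPerm k) := by
      ext σ
      simp only [Finset.mem_filter, Finset.mem_univ, true_and, Finset.mem_image]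
      constructor
      · intro h
        exact ⟨_, (powersum_eq_hook a k hk σ h).symm⟩
      · rintro ⟨m, rfl⟩
        exact hook_isPowersum a k m
    rw [hset, Finset.sum_image (fun m _ m' _ h => hookPerm_inj k h)]
    simp only [invPath_hook]
    rw [Fin.sum_univ_eq_sum_range (fun i => q ^ (k - 1 - i)) k]
    exact Finset.sum_range_reflect (fun i => q ^ i) k
  · intro σ hσ p hp
    have hkp : (σ p : ℕ) = k - 1 := by
      have := (σ p).isLt
      omega
    have hσeq : σ = hookPerm k p := by
      have h1 := powersum_eq_hook a k hk σ hσ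
      rw [h1]
      congr 1
      have h2 : σ p = (⟨k - 1, by omega⟩ : Fin k) := Fin.ext hkp
      rw [← h2, Equiv.Perm.inv_def, Equiv.symm_apply_apply]
    rw [hσeq, invPath_hook]
end

section
/- Let w = w_1 w_2 ... w_k be a powersum word in a (3+1)-free poset P, and let r > 1 be the smallest index with w_r incomparable to w_{r+1}. If w_{r−1} is incomparable to w_{r+1} and w_{r−1} <_P w_j for all j > r+1, then r = 2. -/
/-- Let `w = w_1 ... w_k` be a powersum word in a (3+1)-free poset
and let `r > 1` be the smallest index with `w_r` incomparable (or equal) to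
`w_{r+1}`.  If `w_{r-1}` is incomparable to `w_{r+1}` and `w_{r-1} <_P w_j` for
all `j > r+1`, then `r = 2`.  (Words are 1-indexed, positions `1,...,k`.) -/
theorem stmt_8 {α : Type*} [Preorder α]
    (hfree : ∀ x1 x2 x3 y : α, x1 < x2 → x2 < x3 →
      ¬ (¬ y < x1 ∧ ¬ x1 < y ∧ ¬ y < x2 ∧ ¬ x2 < y ∧ ¬ y < x3 ∧ ¬ x3 < y))
    (k : ℕ) (w : ℕ → α)
    (hdesc : ∀ i, 1 ≤ i → i < k → ¬ (w (i + 1) < w i))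
    (hmin : ∀ i, 1 ≤ i → i < k → ∃ j, i < j ∧ j ≤ k ∧ ¬ (w i < w j))
    (r : ℕ) (hr1 : 1 < r) (hrk : r < k)
    (hrdote : ¬ w r < w (r + 1) ∧ ¬ w (r + 1) < w r)
    (hrmin : ∀ s, 1 ≤ s → s < r → ¬ (¬ w s < w (s + 1) ∧ ¬ w (s + 1) < w s))
    (h1 : ¬ w (r - 1) < w (r + 1) ∧ ¬ w (r + 1) < w (r - 1))
    (h2 : ∀ j, r + 1 < j → j ≤ k → w (r - 1) < w j) :
    r = 2 := by
  by_contra hne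
  have hr3 : 3 ≤ r := by omega
  have chain : ∀ s, 1 ≤ s → s < r → w s < w (s + 1) := by
    intro s hs1 hs2
    have hA := hrmin s hs1 hs2
    have hB := hdesc s hs1 (by omega)
    tauto
  have c1 : w (r - 2) < w (r - 1) := by
    have := chain (r - 2) (by omega) (by omega)
    rwa [show r - 2 + 1 = r - 1 by omega] at this
  have c2 : w (r - 1) < w r := by
    have := chain (r - 1) (by omega) (by omega)
    rwa [show r - 1 + 1 = r by omega] at this
  have hy1 : ¬ w (r + 1) < w (r - 2) := fun h => h1.2 (h.trans c1)
  obtain ⟨j, hj1, hj2, hj3⟩ := hmin (r - 2) (by omega) (by omega)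
  have hj : j = r + 1 := by
    by_contra hjne
    rcases Nat.lt_or_ge j (r + 1) with hlt | hge
    · have : j = r - 1 ∨ j = r := by omega
      rcases this with hj' | hj'
      · exact hj3 (hj' ▸ c1)
      · exact hj3 (hj' ▸ c1.trans c2)
    · exact hj3 (c1.trans (h2 j (by omega) hj2))
  exact hfree (w (r - 2)) (w (r - 1)) (w r) (w (r + 1)) c1 c2
    ⟨hy1, hj ▸ hj3, h1.2, h1.1, hrdote.2, hrdote.1⟩
end

section
/- For partitions μ, ν, η with |η| = |μ| + |ν|, if the structure coefficient g_{μ,ν}^η of m_η in m_μ · m_ν is nonzero, then μ + ν dominates η, i.e. for all i, η_1 + ... + η_i ≤ (μ_1+ν_1) + ... + (μ_i+ν_i). -/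
open scoped Classical

/-- A partition, given as a list of parts, padded to a function `Fin N → ℕ`. -/
def padFun (μ : List ℕ) (N : ℕ) : Fin N → ℕ := fun i => μ.getD (i : ℕ) 0

/-- The monomial symmetric function `m_μ` in `N` variables. -/
noncomputable def monoSym (N : ℕ) (μ : List ℕ) : MvPolynomial (Fin N) ℚ :=
  ∑ g ∈ Finset.image (fun σ : Equiv.Perm (Fin N) => padFun μ N ∘ σ) Finset.univ,
    MvPolynomial.monomial (Finsupp.equivFunOnFinite.symm g) 1



lemma aux_le_emb {k : ℕ} (f : Fin k → ℕ) (hf : StrictMono f) : ∀ i : Fin k, (i : ℕ) ≤ f i := by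
  suffices h : ∀ n, ∀ i : Fin k, (i : ℕ) = n → n ≤ f i by
    intro i; exact h _ i rfl
  intro n
  induction n with
  | zero => intro i _; omega
  | succ m ih =>
    intro i hi
    have hm : m < k := by omega
    have h1 : f ⟨m, hm⟩ < f i := hf (by simp [Fin.lt_def]; omega)
    have h2 := ih ⟨m, hm⟩ rfl
    omega

lemma aux_sum_antitone (f : ℕ → ℕ) (hf : Antitone f) (S : Finset ℕ) :
    ∑ j ∈ S, f j ≤ ∑ t ∈ Finset.range S.card, f t := by
  have himg : Finset.image (S.orderEmbOfFin rfl) Finset.univ = S := by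
    ext x
    simp only [Finset.mem_image, Finset.mem_univ, true_and]
    constructor
    · rintro ⟨i, rfl⟩; exact Finset.orderEmbOfFin_mem S rfl i
    · intro hx
      have hr : x ∈ Set.range (S.orderEmbOfFin rfl) := by
        rw [Finset.range_orderEmbOfFin]; exact hx
      exact hr
  calc ∑ j ∈ S, f j = ∑ i : Fin S.card, f (S.orderEmbOfFin rfl i) := by
        rw [← himg, Finset.sum_image (fun a _ b _ hab => (S.orderEmbOfFin rfl).injective hab)]
        rw [himg]  -- fix card in type? may fail
    _ ≤ ∑ i : Fin S.card, f i :=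
        Finset.sum_le_sum fun i _ => hf (aux_le_emb _ (S.orderEmbOfFin rfl).strictMono i)
    _ = ∑ t ∈ Finset.range S.card, f t := by rw [Finset.sum_range fun t => f t]

lemma aux_getD_antitone {μ : List ℕ} (hμ : List.Pairwise (· ≥ ·) μ) :
    Antitone (fun t => μ.getD t 0) := by
  intro a b hab
  simp only
  rcases lt_or_ge b μ.length with hb | hb
  · have ha : a < μ.length := lt_of_le_of_lt hab hb
    rw [List.getD_eq_getElem _ _ ha, List.getD_eq_getElem _ _ hb]
    rcases eq_or_lt_of_le hab with rfl | hlt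
    · exact le_refl _
    · exact List.pairwise_iff_get.mp hμ ⟨a, ha⟩ ⟨b, hb⟩ hlt
  · rw [List.getD_eq_default _ _ hb]
    exact Nat.zero_le _

/-- If the structure coefficient `g_{μ,ν}^η` of `m_η` in
`m_μ · m_ν` is nonzero (for `|η| = |μ| + |ν|`), then `μ + ν` dominates `η`:
`η_1 + ... + η_i ≤ (μ_1+ν_1) + ... + (μ_i+ν_i)` for all `i`.
(`g_{μ,ν}^η` is the coefficient of the monomial `x^η` in `m_μ · m_ν`.) -/
theorem stmt_10 (N : ℕ) (μ ν η : List ℕ)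
    (hμ : List.Pairwise (· ≥ ·) μ) (hν : List.Pairwise (· ≥ ·) ν)
    (hη : List.Pairwise (· ≥ ·) η)
    (hμpos : ∀ x ∈ μ, 0 < x) (hνpos : ∀ x ∈ ν, 0 < x) (hηpos : ∀ x ∈ η, 0 < x)
    (hsum : η.sum = μ.sum + ν.sum)
    (hN : μ.length + ν.length ≤ N) (hNη : η.length ≤ N)
    (hne : MvPolynomial.coeff (Finsupp.equivFunOnFinite.symm (padFun η N))
      (monoSym N μ * monoSym N ν) ≠ 0) :
    ∀ i, (∑ t ∈ Finset.range i, η.getD t 0) ≤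
      ∑ t ∈ Finset.range i, (μ.getD t 0 + ν.getD t 0) := by
  classical
  -- Step 1: extract permutations σ τ with padη = padμ∘σ + padν∘τ pointwise
  set Gμ := Finset.image (fun σ : Equiv.Perm (Fin N) => padFun μ N ∘ σ) Finset.univ with hGμ
  set Gν := Finset.image (fun σ : Equiv.Perm (Fin N) => padFun ν N ∘ σ) Finset.univ with hGν
  have hexp : monoSym N μ * monoSym N ν =
      ∑ g ∈ Gμ, ∑ h ∈ Gν, MvPolynomial.monomial
        (Finsupp.equivFunOnFinite.symm g + Finsupp.equivFunOnFinite.symm h) (1 : ℚ) := by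
    rw [monoSym, monoSym, Finset.sum_mul_sum]
    refine Finset.sum_congr rfl fun g _ => Finset.sum_congr rfl fun h _ => ?_
    rw [MvPolynomial.monomial_mul, one_mul]
  rw [hexp] at hne
  simp only [MvPolynomial.coeff_sum, MvPolynomial.coeff_monomial] at hne
  obtain ⟨g, hgmem, hg0⟩ := Finset.exists_ne_zero_of_sum_ne_zero hne
  obtain ⟨h, hhmem, hh0⟩ := Finset.exists_ne_zero_of_sum_ne_zero hg0
  have hgh : Finsupp.equivFunOnFinite.symm g + Finsupp.equivFunOnFinite.symm h =
      Finsupp.equivFunOnFinite.symm (padFun η N) := by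
    by_contra hc
    simp [hc] at hh0
  have hpt : ∀ j : Fin N, g j + h j = padFun η N j := by
    intro j
    have := DFunLike.congr_fun hgh j
    simpa using this
  obtain ⟨σ, _, hσ⟩ := Finset.mem_image.mp hgmem
  obtain ⟨τ, _, hτ⟩ := Finset.mem_image.mp hhmem
  -- Step 2
  intro i
  set T : Finset (Fin N) := Finset.univ.filter (fun j => (j : ℕ) < i) with hT
  have hTval : T.image (Fin.val) = Finset.range (min i N) := by
    ext n
    simp only [Finset.mem_image, Finset.mem_filter, Finset.mem_univ, true_and,
      Finset.mem_range, hT]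
    constructor
    · rintro ⟨j, hj, rfl⟩; exact lt_min hj j.isLt
    · intro hn
      exact ⟨⟨n, lt_of_lt_of_le hn (min_le_right _ _)⟩,
        lt_of_lt_of_le hn (min_le_left _ _), rfl⟩
  have hTcard : T.card = min i N := by
    rw [← Finset.card_range (min i N), ← hTval,
      Finset.card_image_of_injective _ Fin.val_injective]
  -- LHS equals sum over T of padη
  have hLHS : (∑ t ∈ Finset.range i, η.getD t 0) = ∑ j ∈ T, padFun η N j := by
    have h1 : ∑ j ∈ T, padFun η N j = ∑ n ∈ T.image Fin.val, η.getD n 0 := by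
      rw [Finset.sum_image (fun a _ b _ hab => Fin.val_injective hab)]
      rfl
    rw [h1, hTval]
    rw [Finset.sum_subset (Finset.range_subset_range.mpr (min_le_left i N))]
    intro x hx hx'
    simp only [Finset.mem_range] at hx hx'
    have hxN : N ≤ x := by omega
    exact List.getD_eq_default _ _ (le_trans hNη hxN)
  -- bound for one factor
  have key : ∀ (lst : List ℕ), List.Pairwise (· ≥ ·) lst → ∀ (π : Equiv.Perm (Fin N)),
      (∑ j ∈ T, padFun lst N (π j)) ≤ ∑ t ∈ Finset.range i, lst.getD t 0 := by
    intro lst hlst π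
    have h1 : ∑ j ∈ T, padFun lst N (π j) = ∑ j ∈ T.image π, padFun lst N j :=
      (Finset.sum_image (fun a _ b _ hab => π.injective hab)).symm
    have h2 : ∑ j ∈ T.image π, padFun lst N j
        = ∑ n ∈ (T.image π).image Fin.val, lst.getD n 0 := by
      rw [Finset.sum_image (fun a _ b _ hab => Fin.val_injective hab)]
      rfl
    have hcard : ((T.image π).image Fin.val).card ≤ i := by
      calc ((T.image π).image Fin.val).card ≤ (T.image π).card := Finset.card_image_le
        _ ≤ T.card := Finset.card_image_le
        _ ≤ i := by rw [hTcard]; exact min_le_left _ _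
    calc ∑ j ∈ T, padFun lst N (π j)
        = ∑ n ∈ (T.image π).image Fin.val, lst.getD n 0 := by rw [h1, h2]
      _ ≤ ∑ t ∈ Finset.range (((T.image π).image Fin.val).card), lst.getD t 0 :=
          aux_sum_antitone _ (aux_getD_antitone hlst) _
      _ ≤ ∑ t ∈ Finset.range i, lst.getD t 0 :=
          Finset.sum_le_sum_of_subset (Finset.range_subset_range.mpr hcard)
  -- combine
  have hsplit : ∑ j ∈ T, padFun η N j
      = (∑ j ∈ T, padFun μ N (σ j)) + ∑ j ∈ T, padFun ν N (τ j) := by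
    rw [← Finset.sum_add_distrib]
    refine Finset.sum_congr rfl fun j _ => ?_
    have := hpt j
    rw [← hσ, ← hτ] at this
    exact this.symm
  rw [hLHS, hsplit, Finset.sum_add_distrib]
  exact Nat.add_le_add (key μ hμ σ) (key ν hν τ)
end

section
/- For partitions μ, ν, η with |η| = |μ| + |ν|, if g_{μ,ν}^η ≠ 0 (the coefficient of m_η in m_μ m_ν), then for every i the conjugate partitions satisfy η'_i ≥ max(μ'_i, ν'_i). -/
open scoped Classical

/-- The `i`-th part of the conjugate partition: `λ'_i = #{j : λ_j ≥ i}`. -/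
def conjPart (lam : List ℕ) (i : ℕ) : ℕ :=
  ((Finset.range lam.length).filter fun j => i ≤ lam.getD j 0).card


lemma conj_card (lam : List ℕ) (N i : ℕ) (hN : lam.length ≤ N) (hi : 1 ≤ i) :
    conjPart lam i = (Finset.univ.filter fun j : Fin N => i ≤ padFun lam N j).card := by
  have h1 : (Finset.univ.filter fun j : Fin N => i ≤ padFun lam N j)
      = (((Finset.range N).filter fun j => i ≤ lam.getD j 0).attachFin
        (fun m hm => (Finset.mem_filter.1 hm).1 |> Finset.mem_range.1)) := by
    ext j
    simp [padFun, Finset.mem_attachFin, j.isLt]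
  rw [h1, Finset.card_attachFin, conjPart]
  congr 1
  ext j
  simp only [Finset.mem_filter, Finset.mem_range]
  constructor
  · rintro ⟨hj, hij⟩
    exact ⟨lt_of_lt_of_le hj hN, hij⟩
  · rintro ⟨hj, hij⟩
    refine ⟨?_, hij⟩
    by_contra hc
    rw [List.getD_eq_default _ _ (le_of_not_gt hc)] at hij
    omega

lemma card_comp_perm (N i : ℕ) (f : Fin N → ℕ) (σ : Equiv.Perm (Fin N)) :
    (Finset.univ.filter fun j : Fin N => i ≤ f (σ j)).card
      = (Finset.univ.filter fun j : Fin N => i ≤ f j).card := by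
  apply Finset.card_nbij (fun j => σ j)
  · intro a ha; simpa using (Finset.mem_filter.1 ha).2
  · intro a _ b _ h; exact σ.injective h
  · intro b hb
    refine ⟨σ.symm b, ?_, by simp⟩
    simp only [Finset.coe_filter, Set.mem_setOf_eq, Equiv.apply_symm_apply]
    exact ⟨Finset.mem_univ _, (by simpa using hb)⟩

/-- If `g_{μ,ν}^η ≠ 0` (the coefficient of `m_η` in `m_μ m_ν`,
with `|η| = |μ| + |ν|`), then `η'_i ≥ max(μ'_i, ν'_i)` for every `i ≥ 1`. -/
theorem stmt_11 (N : ℕ) (μ ν η : List ℕ)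
    (hμ : List.Pairwise (· ≥ ·) μ) (hν : List.Pairwise (· ≥ ·) ν)
    (hη : List.Pairwise (· ≥ ·) η)
    (hμpos : ∀ x ∈ μ, 0 < x) (hνpos : ∀ x ∈ ν, 0 < x) (hηpos : ∀ x ∈ η, 0 < x)
    (hsum : η.sum = μ.sum + ν.sum)
    (hN : μ.length + ν.length ≤ N) (hNη : η.length ≤ N)
    (hne : MvPolynomial.coeff (Finsupp.equivFunOnFinite.symm (padFun η N))
      (monoSym N μ * monoSym N ν) ≠ 0) :
    ∀ i, 1 ≤ i → max (conjPart μ i) (conjPart ν i) ≤ conjPart η i := by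

  rw [monoSym, monoSym, Finset.sum_mul_sum] at hne
  simp only [MvPolynomial.monomial_mul, one_mul, MvPolynomial.coeff_sum,
    MvPolynomial.coeff_monomial] at hne
  obtain ⟨g, hg, hne1⟩ := Finset.exists_ne_zero_of_sum_ne_zero hne
  obtain ⟨h, hh, hne2⟩ := Finset.exists_ne_zero_of_sum_ne_zero hne1
  have heq : Finsupp.equivFunOnFinite.symm g + Finsupp.equivFunOnFinite.symm h
      = Finsupp.equivFunOnFinite.symm (padFun η N) := by
    by_contra hc
    simp [hc] at hne2
  obtain ⟨σ, -, hσ⟩ := Finset.mem_image.1 hg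
  obtain ⟨τ, -, hτ⟩ := Finset.mem_image.1 hh
  have hpt : ∀ j : Fin N, padFun μ N (σ j) + padFun ν N (τ j) = padFun η N j := by
    intro j
    have := DFunLike.congr_fun heq j
    simpa [← hσ, ← hτ, Function.comp] using this
  intro i hi
  have hμN : μ.length ≤ N := by omega
  have hνN : ν.length ≤ N := by omega
  rw [conj_card μ N i hμN hi, conj_card ν N i hνN hi, conj_card η N i hNη hi]
  have key : ∀ (f : Fin N → ℕ), (∀ j, f j ≤ padFun η N j) →
      (Finset.univ.filter fun j : Fin N => i ≤ f j).card
        ≤ (Finset.univ.filter fun j : Fin N => i ≤ padFun η N j).card := by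
    intro f hf
    apply Finset.card_le_card
    intro j hj
    simp only [Finset.mem_filter, Finset.mem_univ, true_and] at hj ⊢
    exact le_trans hj (hf j)
  apply max_le
  · rw [← card_comp_perm N i (padFun μ N) σ]
    exact key _ (fun j => by rw [← hpt j]; omega)
  · rw [← card_comp_perm N i (padFun ν N) τ]
    exact key _ (fun j => by rw [← hpt j]; omega)
end

section
/- Let P be a (3+1)-free poset, let α be a composition with positive entries, and let A be a powerful array of P of shape row(α). Then tab(A), the filling of the partition sort(α) obtained by pushing the entries of the columns of A upward so that columns are top-justified, is a P-tableau: its columns are strictly increasing in P and its rows have no P-descents (T_{i,j} is never greater than T_{i,j+1} in P). -/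
open scoped Classical

/-- The rows of the shape `row(α)` that contain column `c`, in increasing order. -/
noncomputable def rowsList {l : ℕ} (a : Fin l → ℕ) (c : ℕ) : List (Fin l) :=
  (Finset.univ.filter fun i : Fin l => c < a i).sort (· ≤ ·)

/-- The length of column `c` of the shape `sort(α)` (equivalently of `row(α)`). -/
noncomputable def colLen {l : ℕ} (a : Fin l → ℕ) (c : ℕ) : ℕ :=
  (Finset.univ.filter fun i : Fin l => c < a i).card

/-- The entry of `tab(A)` in (0-indexed) position `p` of column `c`: the tableau
map pushes the column entries of `A` upward, so this is the entry of `A` in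
column `c` of the `p`-th row (in increasing row order) whose length exceeds `c`. -/
noncomputable def tabEntry {l : ℕ} {P : Type*} (hl : 0 < l) (a : Fin l → ℕ)
    (A : Fin l → ℕ → P) (p c : ℕ) : P :=
  A ((rowsList a c).getD p ⟨0, hl⟩) c

lemma rowsList_length {l : ℕ} (a : Fin l → ℕ) (c : ℕ) :
    (rowsList a c).length = colLen a c := Finset.length_sort _

lemma rowsList_mem {l : ℕ} (a : Fin l → ℕ) (c : ℕ) {i : Fin l}
    (h : i ∈ rowsList a c) : c < a i := by
  have := (Finset.mem_sort (α := Fin l) (· ≤ ·)).mp h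
  simpa using this

lemma rowsList_sorted {l : ℕ} (a : Fin l → ℕ) (c : ℕ) :
    (rowsList a c).Pairwise (· < ·) := (Finset.sortedLT_sort _).pairwise

lemma rowsList_sublist {l : ℕ} (a : Fin l → ℕ) (c : ℕ) :
    List.Sublist (rowsList a (c + 1)) (rowsList a c) := by
  have h : rowsList a (c + 1)
      = (rowsList a c).filter (fun i => decide (c + 1 < a i)) := by
    refine List.Perm.eq_of_pairwise' (Finset.pairwise_sort _ _)
      ((Finset.pairwise_sort (α := Fin l) _ (· ≤ ·)).sublist (List.filter_sublist)) ?_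
    · refine (List.perm_ext_iff_of_nodup (Finset.sort_nodup _ _)
        ((Finset.sort_nodup _ _).filter _)).mpr ?_
      intro i
      simp only [rowsList, List.mem_filter, Finset.mem_sort, Finset.mem_filter,
        Finset.mem_univ, true_and, decide_eq_true_eq]
      omega
  rw [h]
  exact List.filter_sublist

lemma rowsList_get_le {l : ℕ} (a : Fin l → ℕ) (c p : ℕ)
    (hp : p < (rowsList a (c + 1)).length) (hp' : p < (rowsList a c).length) :
    (rowsList a c).get ⟨p, hp'⟩ ≤ (rowsList a (c + 1)).get ⟨p, hp⟩ := by
  obtain ⟨f, hf⟩ := List.sublist_iff_exists_fin_orderEmbedding_get_eq.mp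
    (rowsList_sublist a c)
  have hle : ∀ n (hn : n < (rowsList a (c + 1)).length),
      n ≤ ((f ⟨n, hn⟩ : Fin (rowsList a c).length) : ℕ) := by
    intro n
    induction n with
    | zero => intro hn; exact Nat.zero_le _
    | succ m ih =>
      intro hn
      have hm : m < (rowsList a (c + 1)).length := Nat.lt_of_succ_lt hn
      have h1 : ((f ⟨m, hm⟩ : Fin (rowsList a c).length) : ℕ)
          < ((f ⟨m + 1, hn⟩ : Fin (rowsList a c).length) : ℕ) :=
        f.strictMono (Fin.mk_lt_mk.mpr (Nat.lt_succ_self m))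
      have h2 := ih hm
      omega
  rw [hf ⟨p, hp⟩]
  exact List.Pairwise.rel_get_of_le (Finset.pairwise_sort _ _)
    (show (⟨p, hp'⟩ : Fin (rowsList a c).length) ≤ f ⟨p, hp⟩ from Fin.le_def.mpr (hle p hp))

/-- For a (3+1)-free poset `P` and a powerful array `A` of shape
`row(α)` (rows are powersum words, columns increase in `P`, and the last entry
of each row is below all later entries in longer rows), the filling `tab(A)` of
`sort(α)` is a `P`-tableau: columns strictly increase in `P` and rows have no
`P`-descents. -/
theorem stmt_14 {P : Type*} [Preorder P]
    (hfree : ∀ x1 x2 x3 y : P, x1 < x2 → x2 < x3 →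
      ¬ (¬ y < x1 ∧ ¬ x1 < y ∧ ¬ y < x2 ∧ ¬ x2 < y ∧ ¬ y < x3 ∧ ¬ x3 < y))
    (l : ℕ) (hl : 0 < l) (a : Fin l → ℕ) (hpos : ∀ i, 0 < a i)
    (A : Fin l → ℕ → P)
    (hrow_desc : ∀ i : Fin l, ∀ j, j + 1 < a i → ¬ A i (j + 1) < A i j)
    (hrow_min : ∀ i : Fin l, ∀ j, j + 1 < a i →
      ∃ j', j < j' ∧ j' < a i ∧ ¬ A i j < A i j')
    (hcol : ∀ i i' : Fin l, i < i' → ∀ t, t < a i → t < a i' → A i t < A i' t)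
    (hend : ∀ i i' : Fin l, i < i' → ∀ t, a i ≤ t → t < a i' →
      A i (a i - 1) < A i' t) :
    (∀ c p p', p < p' → p' < colLen a c →
      tabEntry hl a A p c < tabEntry hl a A p' c) ∧
    (∀ c p, p < colLen a (c + 1) →
      ¬ tabEntry hl a A p (c + 1) < tabEntry hl a A p c) := by
  constructor
  · intro c p p' hpp hp'
    have hlen : p' < (rowsList a c).length := by rwa [rowsList_length]
    have hlenp : p < (rowsList a c).length := lt_trans hpp hlen
    unfold tabEntry
    rw [List.getD_eq_getElem _ _ hlenp, List.getD_eq_getElem _ _ hlen]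
    have hlt : (rowsList a c).get ⟨p, hlenp⟩ < (rowsList a c).get ⟨p', hlen⟩ :=
      List.Pairwise.rel_get_of_lt (rowsList_sorted a c) (Fin.mk_lt_mk.mpr hpp)
    have hm1 : c < a ((rowsList a c).get ⟨p, hlenp⟩) :=
      rowsList_mem a c (List.get_mem _ _)
    have hm2 : c < a ((rowsList a c).get ⟨p', hlen⟩) :=
      rowsList_mem a c (List.get_mem _ _)
    exact hcol _ _ hlt c hm1 hm2
  · intro c p hp
    have hlen' : p < (rowsList a (c + 1)).length := by rwa [rowsList_length]
    have hlen : p < (rowsList a c).length :=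
      lt_of_lt_of_le hlen' (rowsList_sublist a c).length_le
    unfold tabEntry
    rw [List.getD_eq_getElem _ _ hlen', List.getD_eq_getElem _ _ hlen]
    set i := (rowsList a c).get ⟨p, hlen⟩ with hi
    set i' := (rowsList a (c + 1)).get ⟨p, hlen'⟩ with hi'
    have hii' : i ≤ i' := rowsList_get_le a c p hlen' hlen
    have hci : c < a i := rowsList_mem a c (List.get_mem _ _)
    have hci' : c + 1 < a i' := rowsList_mem a (c + 1) (List.get_mem _ _)
    show ¬ A i' (c + 1) < A i c
    rcases eq_or_lt_of_le hii' with heq | hlt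
    · rw [heq]
      exact hrow_desc i' c hci'
    · rcases le_or_gt (a i) (c + 1) with hle | hlt2
      · have hc_eq : c = a i - 1 := by omega
        have := hend i i' hlt (c + 1) hle hci'
        rw [← hc_eq] at this
        intro hcon
        exact lt_asymm this hcon
      · have h1 : A i (c + 1) < A i' (c + 1) := hcol i i' hlt (c + 1) hlt2 hci'
        intro hcon
        exact hrow_desc i c hlt2 (lt_trans h1 hcon)
end

section
/- Let P be a (3+1)-free poset and λ a partition of n. The tableau map tab, restricted to the disjoint union over compositions α of n with sort(α) = λ of the sets of powerful arrays of shape α, is injective. Key step: for a powerful array A of shape α with first row of length α_1, the position α_1 is the left-most right-to-left P-minimum of the first row of tab(A), so the first row of A can be recovered from tab(A). -/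
open scoped Classical

/-- The rows (among `0, ..., l-1`) of the shape `row(α)` containing column `c`,
in increasing order. -/
noncomputable def rowsListN (l : ℕ) (a : ℕ → ℕ) (c : ℕ) : List ℕ :=
  ((Finset.range l).filter fun i => c < a i).sort (· ≤ ·)

/-- The length of column `c` of `sort(α)`. -/
noncomputable def colLenN (l : ℕ) (a : ℕ → ℕ) (c : ℕ) : ℕ :=
  ((Finset.range l).filter fun i => c < a i).card

/-- The entry of `tab(A)` in (0-indexed) position `p` of column `c`. -/
noncomputable def tabEntryN {P : Type*} (l : ℕ) (a : ℕ → ℕ) (A : ℕ → ℕ → P)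
    (p c : ℕ) : P :=
  A ((rowsListN l a c).getD p 0) c

/-- `A` is a powerful array of shape `row(α)`, where `α` is the composition with
`l` positive parts `a 0, ..., a (l-1)`: each row is a powersum word (no
`P`-descents, no nontrivial right-to-left `P`-minima), columns increase in `P`,
and the last entry of each row is below all later entries in longer rows. -/
def IsPowerfulArray {P : Type*} [Preorder P] (l : ℕ) (a : ℕ → ℕ)
    (A : ℕ → ℕ → P) : Prop :=
  (∀ i, l ≤ i → a i = 0) ∧ (∀ i, i < l → 0 < a i) ∧
  (∀ i, i < l → ∀ j, j + 1 < a i → ¬ A i (j + 1) < A i j) ∧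
  (∀ i, i < l → ∀ j, j + 1 < a i → ∃ j', j < j' ∧ j' < a i ∧ ¬ A i j < A i j') ∧
  (∀ i i', i < i' → i' < l → ∀ t, t < a i → t < a i' → A i t < A i' t) ∧
  (∀ i i', i < i' → i' < l → ∀ t, a i ≤ t → t < a i' → A i (a i - 1) < A i' t)

/-! ### Auxiliary lemmas -/

lemma length_rowsListN (l : ℕ) (a : ℕ → ℕ) (c : ℕ) :
    (rowsListN l a c).length = colLenN l a c := Finset.length_sort _

lemma mem_rowsListN {l : ℕ} {a : ℕ → ℕ} {c i : ℕ} :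
    i ∈ rowsListN l a c ↔ i < l ∧ c < a i := by
  simp [rowsListN, Finset.mem_sort, Finset.mem_filter, Finset.mem_range]

lemma getD_mem_of_lt (L : List ℕ) (p : ℕ) (hp : p < L.length) : L.getD p 0 ∈ L := by
  rw [List.getD_eq_getElem _ _ hp]; exact List.getElem_mem _

lemma col_pos {l : ℕ} {a : ℕ → ℕ} {c : ℕ} (hl : 0 < l) (hc : c < a 0) :
    0 < colLenN l a c :=
  Finset.card_pos.mpr ⟨0, by simp [Finset.mem_filter, Finset.mem_range, hl, hc]⟩

lemma sort_getD_zero {s : Finset ℕ} (h : 0 ∈ s) : (s.sort (· ≤ ·)).getD 0 0 = 0 := by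
  have hne : s.Nonempty := ⟨0, h⟩
  have hl : 0 < (s.sort (· ≤ ·)).length := by
    rw [Finset.length_sort]; exact Finset.card_pos.mpr hne
  rw [List.getD_eq_getElem _ _ hl]
  rw [Finset.sorted_zero_eq_min']
  exact Nat.le_zero.mp (s.min'_le 0 h)

lemma top_entry {P : Type*} {l : ℕ} {a : ℕ → ℕ} (A : ℕ → ℕ → P) {c : ℕ}
    (hl : 0 < l) (hc : c < a 0) : tabEntryN l a A 0 c = A 0 c := by
  unfold tabEntryN rowsListN
  rw [sort_getD_zero (by simp [Finset.mem_filter, Finset.mem_range, hl, hc])]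

lemma sort_image_succ (s : Finset ℕ) :
    (s.image (· + 1)).sort (· ≤ ·) = (s.sort (· ≤ ·)).map (· + 1) := by
  have hinj : Function.Injective (· + 1 : ℕ → ℕ) := add_left_injective 1
  have hperm : List.Perm ((s.image (· + 1)).sort (· ≤ ·)) ((s.sort (· ≤ ·)).map (· + 1)) := by
    refine (List.perm_ext_iff_of_nodup (Finset.sort_nodup _ _)
      ((Finset.sort_nodup _ _).map hinj)).mpr fun x => ?_
    simp [Finset.mem_sort, Finset.mem_image, List.mem_map]
  exact List.Perm.eq_of_pairwise' (Finset.pairwise_sort _ _)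
    (List.Pairwise.map _ (fun x y h => Nat.add_le_add_right h 1) (Finset.pairwise_sort _ _)) hperm

lemma sort_insert_zero {s : Finset ℕ} (h : 0 ∉ s) :
    ((insert 0 s).sort (· ≤ ·)) = 0 :: s.sort (· ≤ ·) := by
  have hperm : List.Perm ((insert 0 s).sort (· ≤ ·)) (0 :: s.sort (· ≤ ·)) := by
    refine (List.perm_ext_iff_of_nodup (Finset.sort_nodup _ _)
      (List.nodup_cons.mpr ⟨by simp [Finset.mem_sort, h], Finset.sort_nodup _ _⟩)).mpr fun x => ?_
    simp [Finset.mem_sort, Finset.mem_insert]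
  exact List.Perm.eq_of_pairwise' (Finset.pairwise_sort _ _)
    (List.pairwise_cons.mpr ⟨fun b _ => Nat.zero_le b, Finset.pairwise_sort _ _⟩) hperm

lemma filter_shift (a : ℕ → ℕ) (c k : ℕ) :
    ((Finset.range (k+1)).filter fun i => c < a i) =
      (if c < a 0 then insert 0 (((Finset.range k).filter fun i => c < a (i+1)).image (· + 1))
       else ((Finset.range k).filter fun i => c < a (i+1)).image (· + 1)) := by
  ext x
  rcases x with _ | y <;> split_ifs with h <;>
    simp_all [Finset.mem_filter, Finset.mem_range, Finset.mem_insert, Finset.mem_image]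

lemma rowsList_shift (a : ℕ → ℕ) (c k : ℕ) :
    rowsListN (k+1) a c =
      if c < a 0 then 0 :: (rowsListN k (fun i => a (i+1)) c).map (· + 1)
      else (rowsListN k (fun i => a (i+1)) c).map (· + 1) := by
  unfold rowsListN
  rw [filter_shift]
  split_ifs with h
  · rw [sort_insert_zero (by simp), sort_image_succ]
  · rw [sort_image_succ]

lemma colLen_shift (a : ℕ → ℕ) (c k : ℕ) :
    colLenN (k+1) a c = colLenN k (fun i => a (i+1)) c + (if c < a 0 then 1 else 0) := by
  rw [← length_rowsListN, ← length_rowsListN, rowsList_shift]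
  split_ifs <;> simp

lemma tabEntry_shift {P : Type*} (a : ℕ → ℕ) (A : ℕ → ℕ → P) (k p c : ℕ)
    (hp : p < colLenN k (fun i => a (i+1)) c) :
    tabEntryN (k+1) a A (p + if c < a 0 then 1 else 0) c
      = tabEntryN k (fun i => a (i+1)) (fun i t => A (i+1) t) p c := by
  have hp' : p < (rowsListN k (fun i => a (i+1)) c).length := by
    rw [length_rowsListN]; exact hp
  unfold tabEntryN
  rw [rowsList_shift]
  split_ifs with h
  · rw [List.getD_cons_succ, List.getD_eq_getElem _ _ (by simpa using hp'),
      List.getD_eq_getElem _ _ hp', List.getElem_map]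
  · rw [Nat.add_zero, List.getD_eq_getElem _ _ (by simpa using hp'),
      List.getD_eq_getElem _ _ hp', List.getElem_map]

section Key
variable {P : Type*} [Preorder P]

lemma key1 {l : ℕ} {a : ℕ → ℕ} {A : ℕ → ℕ → P} (hA : IsPowerfulArray l a A)
    (hl : 0 < l) {c : ℕ} (hc : a 0 ≤ c) (hcol : 0 < colLenN l a c) :
    tabEntryN l a A 0 (a 0 - 1) < tabEntryN l a A 0 c := by
  have ha0 : 0 < a 0 := hA.2.1 0 hl
  set i := (rowsListN l a c).getD 0 0 with hi_def
  have hi : i ∈ rowsListN l a c :=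
    getD_mem_of_lt _ _ (by rw [length_rowsListN]; exact hcol)
  obtain ⟨hil, hci⟩ := mem_rowsListN.mp hi
  have h0i : 0 < i := by
    rcases Nat.eq_zero_or_pos i with h0 | h0
    · rw [h0] at hci; omega
    · exact h0
  rw [top_entry A hl (by omega)]
  exact hA.2.2.2.2.2 0 i h0i hil c hc hci

lemma key2 {l : ℕ} {a : ℕ → ℕ} {A : ℕ → ℕ → P} (hA : IsPowerfulArray l a A)
    (hl : 0 < l) {j : ℕ} (hj : j + 1 < a 0) :
    ∃ c, j < c ∧ 0 < colLenN l a c ∧ ¬ tabEntryN l a A 0 j < tabEntryN l a A 0 c := by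
  obtain ⟨j', h1, h2, h3⟩ := hA.2.2.2.1 0 hl j hj
  refine ⟨j', h1, col_pos hl h2, ?_⟩
  rw [top_entry A hl (by omega), top_entry A hl h2]
  exact h3

lemma first_le {l : ℕ} {a a' : ℕ → ℕ} {A A' : ℕ → ℕ → P}
    (hA : IsPowerfulArray l a A) (hA' : IsPowerfulArray l a' A') (hl : 0 < l)
    (hcols : ∀ c, colLenN l a c = colLenN l a' c)
    (hT : ∀ c p, p < colLenN l a c → tabEntryN l a A p c = tabEntryN l a' A' p c) :
    a 0 ≤ a' 0 := by
  by_contra h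
  push_neg at h
  have ha'0 : 0 < a' 0 := hA'.2.1 0 hl
  obtain ⟨c, hc1, hc2, hc3⟩ := key2 hA hl (j := a' 0 - 1) (by omega)
  have hcol' : 0 < colLenN l a' c := by rw [← hcols]; exact hc2
  have hkey := key1 hA' hl (c := c) (by omega) hcol'
  have hcolj : 0 < colLenN l a (a' 0 - 1) := by
    rw [hcols]; exact col_pos hl (by omega)
  rw [← hT c 0 hc2, ← hT (a' 0 - 1) 0 hcolj] at hkey
  exact hc3 hkey

lemma shift_powerful {k : ℕ} {a : ℕ → ℕ} {A : ℕ → ℕ → P}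
    (hA : IsPowerfulArray (k+1) a A) :
    IsPowerfulArray k (fun i => a (i+1)) (fun i t => A (i+1) t) := by
  obtain ⟨h1, h2, h3, h4, h5, h6⟩ := hA
  exact ⟨fun i hi => h1 (i+1) (by omega), fun i hi => h2 (i+1) (by omega),
    fun i hi j hj => h3 (i+1) (by omega) j hj,
    fun i hi j hj => h4 (i+1) (by omega) j hj,
    fun i i' hii hi' t ht ht' => h5 (i+1) (i'+1) (by omega) (by omega) t ht ht',
    fun i i' hii hi' t ht ht' => h6 (i+1) (i'+1) (by omega) (by omega) t ht ht'⟩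

lemma aux_main : ∀ (l : ℕ) (a a' : ℕ → ℕ) (A A' : ℕ → ℕ → P),
    IsPowerfulArray l a A → IsPowerfulArray l a' A' →
    (∀ c, colLenN l a c = colLenN l a' c) →
    (∀ c p, p < colLenN l a c → tabEntryN l a A p c = tabEntryN l a' A' p c) →
    (∀ i, a i = a' i) ∧ (∀ i t, i < l → t < a i → A i t = A' i t) := by
  intro l
  induction l with
  | zero =>
    intro a a' A A' hA hA' _ _
    exact ⟨fun i => by rw [hA.1 i (Nat.zero_le i), hA'.1 i (Nat.zero_le i)],
      fun i t hi => absurd hi (Nat.not_lt_zero i)⟩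
  | succ k IH =>
    intro a a' A A' hA hA' hcols hT
    have hl : 0 < k + 1 := Nat.succ_pos k
    have hT' : ∀ c p, p < colLenN (k+1) a' c →
        tabEntryN (k+1) a' A' p c = tabEntryN (k+1) a A p c := by
      intro c p hp
      exact (hT c p (by rw [hcols]; exact hp)).symm
    have ha0 : a 0 = a' 0 :=
      le_antisymm (first_le hA hA' hl hcols hT)
        (first_le hA' hA hl (fun c => (hcols c).symm) hT')
    have hrow0 : ∀ t, t < a 0 → A 0 t = A' 0 t := by
      intro t ht
      rw [← top_entry A hl ht, ← top_entry A' hl (ha0 ▸ ht)]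
      exact hT t 0 (col_pos hl ht)
    have hb : IsPowerfulArray k (fun i => a (i+1)) (fun i t => A (i+1) t) :=
      shift_powerful hA
    have hb' : IsPowerfulArray k (fun i => a' (i+1)) (fun i t => A' (i+1) t) :=
      shift_powerful hA'
    have hcolsb : ∀ c, colLenN k (fun i => a (i+1)) c = colLenN k (fun i => a' (i+1)) c := by
      intro c
      have := hcols c
      rw [colLen_shift, colLen_shift, ha0] at this
      omega
    have hTb : ∀ c p, p < colLenN k (fun i => a (i+1)) c →
        tabEntryN k (fun i => a (i+1)) (fun i t => A (i+1) t) p c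
          = tabEntryN k (fun i => a' (i+1)) (fun i t => A' (i+1) t) p c := by
      intro c p hp
      have hp' : p < colLenN k (fun i => a' (i+1)) c := by rw [← hcolsb]; exact hp
      rw [← tabEntry_shift a A k p c hp, ← tabEntry_shift a' A' k p c hp']
      have hlt : p + (if c < a 0 then 1 else 0) < colLenN (k+1) a c := by
        rw [colLen_shift]; omega
      rw [ha0]
      refine hT c _ ?_
      rw [colLen_shift, ha0]
      split_ifs <;> omega
    obtain ⟨hb1, hb2⟩ := IH _ _ _ _ hb hb' hcolsb hTb
    constructor
    · intro i
      rcases i with _ | j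
      · exact ha0
      · exact hb1 j
    · intro i t hi ht
      rcases i with _ | j
      · exact hrow0 t ht
      · exact hb2 j t (by omega) ht

end Key

lemma colLen_zero_eq {P : Type*} [Preorder P] {l : ℕ} {a : ℕ → ℕ} {A : ℕ → ℕ → P}
    (hA : IsPowerfulArray l a A) : colLenN l a 0 = l := by
  unfold colLenN
  rw [Finset.filter_true_of_mem fun i hi => hA.2.1 i (Finset.mem_range.mp hi)]
  exact Finset.card_range l

/-- For a (3+1)-free poset `P`, the tableau map is injective on
the disjoint union of powerful arrays over all compositions with a given sort:
if powerful arrays `A` (of shape `α` with `l` parts) and `A'` (of shape `α'`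
with `l'` parts) have the same image under `tab` (same column lengths and the
same entries), then `α = α'` and `A = A'` on all cells. -/
theorem stmt_15 {P : Type*} [Preorder P]
    (hfree : ∀ x1 x2 x3 y : P, x1 < x2 → x2 < x3 →
      ¬ (¬ y < x1 ∧ ¬ x1 < y ∧ ¬ y < x2 ∧ ¬ x2 < y ∧ ¬ y < x3 ∧ ¬ x3 < y))
    (l l' : ℕ) (a a' : ℕ → ℕ) (A A' : ℕ → ℕ → P)
    (hA : IsPowerfulArray l a A) (hA' : IsPowerfulArray l' a' A')
    (hcols : ∀ c, colLenN l a c = colLenN l' a' c)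
    (hT : ∀ c p, p < colLenN l a c →
      tabEntryN l a A p c = tabEntryN l' a' A' p c) :
    l = l' ∧ (∀ i, a i = a' i) ∧ (∀ i t, i < l → t < a i → A i t = A' i t) := by
  have hll' : l = l' := by
    rw [← colLen_zero_eq hA, ← colLen_zero_eq hA', hcols 0]
  subst hll'
  obtain ⟨h1, h2⟩ := aux_main l a a' A A' hA hA' hcols hT
  exact ⟨rfl, h1, h2⟩
end

section
/- Let P be a poset on [n] and let V = v_1 <_P ... <_P v_s and W = w_1 <_P ... <_P w_t be two disjoint chains such that the incomparability graph induced on V ∪ W is connected and each element of each chain is incomparable to at most two elements of the other chain, with any two such elements adjacent in their chain. Then |s − t| ≤ 1. -/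
/-- Two poset elements are incomparable: distinct and neither is below the other. -/
def PosetIncompRel {α : Type*} [Preorder α] (x y : α) : Prop :=
  x ≠ y ∧ ¬ x < y ∧ ¬ y < x

/-- The incomparability graph induced on the union of two chains
`V = (v_1 <_P ... <_P v_s)` and `W = (w_1 <_P ... <_P w_t)`. -/
noncomputable def ladderGraph {α : Type*} [Preorder α] {s t : ℕ}
    (v : Fin s → α) (w : Fin t → α) : SimpleGraph (Fin s ⊕ Fin t) :=
  SimpleGraph.fromRel fun x y => PosetIncompRel (Sum.elim v w x) (Sum.elim v w y)

/-- Let `V`, `W` be disjoint chains in a poset such that the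
incomparability graph induced on `V ∪ W` is connected and each element of
either chain is incomparable to at most two elements of the other chain, any
two such elements being adjacent in their chain (encoded: if an element is
incomparable to two elements of the other chain, their indices are
consecutive).  Then `|s - t| ≤ 1`. -/
theorem stmt_19 {α : Type*} [Preorder α] {s t : ℕ}
    (v : Fin s → α) (w : Fin t → α)
    (hv : StrictMono v) (hw : StrictMono w)
    (hdisj : ∀ i j, v i ≠ w j)
    (hadjV : ∀ (i : Fin s) (j1 j2 : Fin t), j1 < j2 →
      (¬ v i < w j1 ∧ ¬ w j1 < v i) → (¬ v i < w j2 ∧ ¬ w j2 < v i) →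
      (j2 : ℕ) = (j1 : ℕ) + 1)
    (hadjW : ∀ (j : Fin t) (i1 i2 : Fin s), i1 < i2 →
      (¬ w j < v i1 ∧ ¬ v i1 < w j) → (¬ w j < v i2 ∧ ¬ v i2 < w j) →
      (i2 : ℕ) = (i1 : ℕ) + 1)
    (hconn : (ladderGraph v w).Connected) :
    s ≤ t + 1 ∧ t ≤ s + 1 := by
  classical
  set G := ladderGraph v w with hG
  -- adjacency between cross vertices gives incomparability
  have hP : ∀ (i : Fin s) (j : Fin t), G.Adj (Sum.inl i) (Sum.inr j) →
      ¬ v i < w j ∧ ¬ w j < v i := by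
    intro i j h
    simp only [hG, ladderGraph, SimpleGraph.fromRel_adj, PosetIncompRel, Sum.elim_inl,
      Sum.elim_inr] at h
    tauto
  -- no edges within V
  have hVV : ∀ i i' : Fin s, ¬ G.Adj (Sum.inl i) (Sum.inl i') := by
    intro i i' h
    simp only [hG, ladderGraph, SimpleGraph.fromRel_adj, PosetIncompRel, Sum.elim_inl,
      ne_eq, Sum.inl.injEq] at h
    have hne : i ≠ i' := h.1
    rcases hne.lt_or_gt with hlt | hlt
    · exact absurd (hv hlt) (by tauto)
    · exact absurd (hv hlt) (by tauto)
  have hWW : ∀ j j' : Fin t, ¬ G.Adj (Sum.inr j) (Sum.inr j') := by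
    intro j j' h
    simp only [hG, ladderGraph, SimpleGraph.fromRel_adj, PosetIncompRel, Sum.elim_inr,
      ne_eq, Sum.inr.injEq] at h
    have hne : j ≠ j' := h.1
    rcases hne.lt_or_gt with hlt | hlt
    · exact absurd (hw hlt) (by tauto)
    · exact absurd (hw hlt) (by tauto)
  -- the set of cross edges
  set A : Finset (Fin s × Fin t) :=
    Finset.univ.filter (fun p => G.Adj (Sum.inl p.1) (Sum.inr p.2)) with hA
  -- upper bound: A.card ≤ 2 * s
  have hub1 : A.card ≤ 2 * s := by
    have : A.card = ∑ i : Fin s, (A.filter fun p => p.1 = i).card :=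
      Finset.card_eq_sum_card_fiberwise (by intro p _; exact Finset.mem_univ _)
    rw [this]
    calc ∑ i : Fin s, (A.filter fun p => p.1 = i).card
        ≤ ∑ _i : Fin s, 2 := by
          apply Finset.sum_le_sum
          intro i _
          by_contra hlt
          push_neg at hlt
          obtain ⟨a, b, c, ha, hb, hc, hab, hac, hbc⟩ := Finset.two_lt_card_iff.mp hlt
          simp only [hA, Finset.mem_filter, Finset.mem_univ, true_and] at ha hb hc
          obtain ⟨ha1, ha2⟩ := ha
          obtain ⟨hb1, hb2⟩ := hb
          obtain ⟨hc1, hc2⟩ := hc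
          have pa : ¬ v i < w a.2 ∧ ¬ w a.2 < v i := hP i a.2 (by rw [← ha2]; exact ha1)
          have pb : ¬ v i < w b.2 ∧ ¬ w b.2 < v i := hP i b.2 (by rw [← hb2]; exact hb1)
          have pc : ¬ v i < w c.2 ∧ ¬ w c.2 < v i := hP i c.2 (by rw [← hc2]; exact hc1)
          have hne2 : a.2 ≠ b.2 ∧ a.2 ≠ c.2 ∧ b.2 ≠ c.2 := by
            refine ⟨?_, ?_, ?_⟩ <;> intro h
            · exact hab (Prod.ext (ha2.trans hb2.symm) h)
            · exact hac (Prod.ext (ha2.trans hc2.symm) h)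
            · exact hbc (Prod.ext (hb2.trans hc2.symm) h)
          have consec : ∀ j1 j2 : Fin t, j1 ≠ j2 →
              (¬ v i < w j1 ∧ ¬ w j1 < v i) → (¬ v i < w j2 ∧ ¬ w j2 < v i) →
              (j2 : ℕ) = (j1 : ℕ) + 1 ∨ (j1 : ℕ) = (j2 : ℕ) + 1 := by
            intro j1 j2 hne p1 p2
            rcases hne.lt_or_gt with hlt | hlt
            · exact Or.inl (hadjV i j1 j2 hlt p1 p2)
            · exact Or.inr (hadjV i j2 j1 hlt p2 p1)
          have c1 := consec a.2 b.2 hne2.1 pa pb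
          have c2 := consec a.2 c.2 hne2.2.1 pa pc
          have c3 := consec b.2 c.2 hne2.2.2 pb pc
          have nab : (a.2 : ℕ) ≠ b.2 := fun h => hne2.1 (Fin.ext h)
          have nac : (a.2 : ℕ) ≠ c.2 := fun h => hne2.2.1 (Fin.ext h)
          have nbc : (b.2 : ℕ) ≠ c.2 := fun h => hne2.2.2 (Fin.ext h)
          omega
      _ = 2 * s := by simp [Finset.sum_const, mul_comm]
  -- upper bound: A.card ≤ 2 * t
  have hub2 : A.card ≤ 2 * t := by
    have : A.card = ∑ j : Fin t, (A.filter fun p => p.2 = j).card :=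
      Finset.card_eq_sum_card_fiberwise (by intro p _; exact Finset.mem_univ _)
    rw [this]
    calc ∑ j : Fin t, (A.filter fun p => p.2 = j).card
        ≤ ∑ _j : Fin t, 2 := by
          apply Finset.sum_le_sum
          intro j _
          by_contra hlt
          push_neg at hlt
          obtain ⟨a, b, c, ha, hb, hc, hab, hac, hbc⟩ := Finset.two_lt_card_iff.mp hlt
          simp only [hA, Finset.mem_filter, Finset.mem_univ, true_and] at ha hb hc
          obtain ⟨ha1, ha2⟩ := ha
          obtain ⟨hb1, hb2⟩ := hb
          obtain ⟨hc1, hc2⟩ := hc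
          have pa : ¬ w j < v a.1 ∧ ¬ v a.1 < w j := by
            have := hP a.1 j (by rw [← ha2]; exact ha1); tauto
          have pb : ¬ w j < v b.1 ∧ ¬ v b.1 < w j := by
            have := hP b.1 j (by rw [← hb2]; exact hb1); tauto
          have pc : ¬ w j < v c.1 ∧ ¬ v c.1 < w j := by
            have := hP c.1 j (by rw [← hc2]; exact hc1); tauto
          have hne2 : a.1 ≠ b.1 ∧ a.1 ≠ c.1 ∧ b.1 ≠ c.1 := by
            refine ⟨?_, ?_, ?_⟩ <;> intro h
            · exact hab (Prod.ext h (ha2.trans hb2.symm))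
            · exact hac (Prod.ext h (ha2.trans hc2.symm))
            · exact hbc (Prod.ext h (hb2.trans hc2.symm))
          have consec : ∀ i1 i2 : Fin s, i1 ≠ i2 →
              (¬ w j < v i1 ∧ ¬ v i1 < w j) → (¬ w j < v i2 ∧ ¬ v i2 < w j) →
              (i2 : ℕ) = (i1 : ℕ) + 1 ∨ (i1 : ℕ) = (i2 : ℕ) + 1 := by
            intro i1 i2 hne p1 p2
            rcases hne.lt_or_gt with hlt | hlt
            · exact Or.inl (hadjW j i1 i2 hlt p1 p2)
            · exact Or.inr (hadjW j i2 i1 hlt p2 p1)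
          have c1 := consec a.1 b.1 hne2.1 pa pb
          have c2 := consec a.1 c.1 hne2.2.1 pa pc
          have c3 := consec b.1 c.1 hne2.2.2 pb pc
          have nab : (a.1 : ℕ) ≠ b.1 := fun h => hne2.1 (Fin.ext h)
          have nac : (a.1 : ℕ) ≠ c.1 := fun h => hne2.2.1 (Fin.ext h)
          have nbc : (b.1 : ℕ) ≠ c.1 := fun h => hne2.2.2 (Fin.ext h)
          omega
      _ = 2 * t := by simp [Finset.sum_const, mul_comm]
  -- degenerate cases
  rcases Nat.eq_zero_or_pos s with hs | hs
  · subst hs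
    have hbot : G = ⊥ := by
      ext x y
      simp only [SimpleGraph.bot_adj, iff_false]
      cases x with
      | inl i => exact i.elim0
      | inr j =>
        cases y with
        | inl i => exact i.elim0
        | inr j' => exact hWW j j'
    have hsub : ∀ x y : Fin 0 ⊕ Fin t, x = y := by
      intro x y
      have := hconn.preconnected x y
      rw [hbot] at this
      exact SimpleGraph.reachable_bot.mp this
    have ht1 : t ≤ 1 := by
      have : Fintype.card (Fin 0 ⊕ Fin t) ≤ 1 :=
        Fintype.card_le_one_iff.mpr fun a b => hsub a b
      simpa [Fintype.card_sum] using this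
    omega
  rcases Nat.eq_zero_or_pos t with ht | ht
  · subst ht
    have hbot : G = ⊥ := by
      ext x y
      simp only [SimpleGraph.bot_adj, iff_false]
      cases x with
      | inr j => exact j.elim0
      | inl i =>
        cases y with
        | inr j => exact j.elim0
        | inl i' => exact hVV i i'
    have hsub : ∀ x y : Fin s ⊕ Fin 0, x = y := by
      intro x y
      have := hconn.preconnected x y
      rw [hbot] at this
      exact SimpleGraph.reachable_bot.mp this
    have hs1 : s ≤ 1 := by
      have : Fintype.card (Fin s ⊕ Fin 0) ≤ 1 :=
        Fintype.card_le_one_iff.mpr fun a b => hsub a b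
      simpa [Fintype.card_sum] using this
    omega
  have hinh : Inhabited (Fin s × Fin t) := ⟨(⟨0, hs⟩, ⟨0, ht⟩)⟩
  -- lower bound: connectivity gives s + t - 1 ≤ A.card
  have hne : Nonempty (Fin s ⊕ Fin t) := hconn.nonempty
  obtain ⟨r⟩ := hne
  have step : ∀ x : Fin s ⊕ Fin t, x ≠ r → ∃ y, G.Adj x y ∧ G.dist y r < G.dist x r := by
    intro x hx
    obtain ⟨p, hp⟩ := hconn.exists_walk_length_eq_dist x r
    have hpos : 0 < G.dist x r := hconn.pos_dist_of_ne hx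
    cases p with
    | nil => simp only [SimpleGraph.Walk.length_nil] at hp; omega
    | @cons _ y _ h q =>
      refine ⟨y, h, ?_⟩
      have h1 := SimpleGraph.dist_le q
      simp only [SimpleGraph.Walk.length_cons] at hp
      omega
  have key : ∀ x : Fin s ⊕ Fin t, x ≠ r → ∃ p : Fin s × Fin t, p ∈ A ∧
      ((x = Sum.inl p.1 ∧ G.dist (Sum.inr p.2) r < G.dist (Sum.inl p.1) r) ∨
       (x = Sum.inr p.2 ∧ G.dist (Sum.inl p.1) r < G.dist (Sum.inr p.2) r)) := by
    intro x hx
    obtain ⟨y, hadj, hd⟩ := step x hx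
    cases x with
    | inl i =>
      cases y with
      | inl i' => exact absurd hadj (hVV i i')
      | inr j =>
        exact ⟨(i, j), by simpa [hA] using hadj, Or.inl ⟨rfl, hd⟩⟩
    | inr j =>
      cases y with
      | inl i =>
        exact ⟨(i, j), by simpa [hA] using hadj.symm, Or.inr ⟨rfl, hd⟩⟩
      | inr j' => exact absurd hadj (hWW j j')
  choose! f hfA hf using key
  have hinj : Set.InjOn f ((Finset.univ.erase r : Finset (Fin s ⊕ Fin t)) : Set (Fin s ⊕ Fin t)) := by
    intro x hx y hy hxy
    rw [Finset.coe_erase] at hx hy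
    have hx' : x ≠ r := hx.2
    have hy' : y ≠ r := hy.2
    rcases hf x hx' with ⟨e1, d1⟩ | ⟨e1, d1⟩ <;> rcases hf y hy' with ⟨e2, d2⟩ | ⟨e2, d2⟩
    · rw [e1, e2, hxy]
    · rw [hxy] at d1; omega
    · rw [hxy] at d1; omega
    · rw [e1, e2, hxy]
  have hcard : (Finset.univ.erase r).card ≤ A.card :=
    Finset.card_le_card_of_injOn f (fun x hx => hfA x (Finset.mem_erase.mp hx).1) hinj
  have hcard2 : (Finset.univ.erase r).card = s + t - 1 := by
    rw [Finset.card_erase_of_mem (Finset.mem_univ r)]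
    simp [Fintype.card_sum]
  omega
end
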